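/- arXiv:2009.00741 — 7 statements merged into one kernel-verified Lean document; each statement's English description precedes it below -/
import Mathlib

section
/- Let G be a triangle-free simple graph on n vertices with minimum degree δ, and let r ≥ 4. Suppose U ⊆ V(G) with |U| = 2r is such that the auxiliary graph H on vertex set U, where two vertices are joined exactly when their distance in G is precisely 2, is a disjoint union of two cycles each of length r. Then n ≥ 2·⌈rδ/2⌉. -/
open SimpleGraph Finset

open Fin.CommRing in
private lemma fin_ne_aux (m k : ℕ) (h0 : 0 < k) (hk : k < m + 4) :
    ((k : ℕ) : Fin (m+4)) ≠ 0 := by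
  intro h
  rw [Fin.ext_iff, Fin.val_natCast, Nat.mod_eq_of_lt hk] at h
  simp at h
  omega

open Fin.CommRing in
private lemma cycle_no_triangle (m : ℕ) {a b c : Fin (m+4)}
    (hab : (cycleGraph (m+4)).Adj a b) (hac : (cycleGraph (m+4)).Adj a c)
    (hbc : (cycleGraph (m+4)).Adj b c) : False := by
  have h1 : (1 : Fin (m+4)) ≠ 0 := by
    have := fin_ne_aux m 1 (by omega) (by omega); simpa using this
  have h3 : (3 : Fin (m+4)) ≠ 0 := by
    have := fin_ne_aux m 3 (by omega) (by omega); simpa using this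
  have e : ∀ u v : Fin (m+4), (cycleGraph (m+4)).Adj u v → u - v = 1 ∨ v - u = 1 := by
    intro u v h
    have hm : (m+4) = (m+2)+2 := by omega
    rw [hm] at *
    exact cycleGraph_adj.mp h
  rcases e _ _ hab with p1 | p1 <;> rcases e _ _ hac with p2 | p2 <;>
    rcases e _ _ hbc with p3 | p3
  · exact h1 (by linear_combination -p1 + p2 - p3)
  · exact h1 (by linear_combination p1 - p2 - p3)
  · exact h3 (by linear_combination -p1 - p2 - p3)
  · exact h1 (by linear_combination -p1 - p2 + p3)
  · exact h1 (by linear_combination -p1 - p2 + p3)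
  · exact h3 (by linear_combination -p1 - p2 - p3)
  · exact h1 (by linear_combination p1 - p2 - p3)
  · exact h1 (by linear_combination -p1 + p2 - p3)

private lemma common_nbr_dist_two {V : Type*} (G : SimpleGraph V) (hfree : G.CliqueFree 3)
    {u v w : V} (hne : u ≠ v) (h1 : G.Adj w u) (h2 : G.Adj w v) : G.dist u v = 2 := by
  classical
  have hadj : ¬ G.Adj u v := fun h =>
    hfree {w, u, v} (SimpleGraph.is3Clique_triple_iff.mpr ⟨h1, h2, h⟩)
  have hle : G.dist u v ≤ 2 := by
    have := G.dist_le (SimpleGraph.Walk.cons h1.symm (SimpleGraph.Walk.cons h2 SimpleGraph.Walk.nil))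
    simpa using this
  have hreach : G.Reachable u v :=
    ⟨SimpleGraph.Walk.cons h1.symm (SimpleGraph.Walk.cons h2 SimpleGraph.Walk.nil)⟩
  have h0 : G.dist u v ≠ 0 := fun h => hne (hreach.dist_eq_zero_iff.mp h)
  have hone : G.dist u v ≠ 1 := fun h => hadj (SimpleGraph.dist_eq_one_iff_adj.mp h)
  omega

/-- The auxiliary graph on a set `U` of vertices of `G`, where two vertices are joined
exactly when their distance in `G` is precisely `2`. -/
def distTwoGraph {V : Type*} (G : SimpleGraph V) (U : Set V) : SimpleGraph U where
  Adj a b := G.dist a b = 2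
  symm := ⟨by intro a b h; rwa [SimpleGraph.dist_comm]⟩
  loopless := ⟨by intro a h; simp [SimpleGraph.dist_self] at h⟩

/-- Disjoint union of two simple graphs. -/
def graphDisjUnion {α β : Type*} (A : SimpleGraph α) (B : SimpleGraph β) :
    SimpleGraph (α ⊕ β) where
  Adj x y := match x, y with
    | .inl a, .inl b => A.Adj a b
    | .inr a, .inr b => B.Adj a b
    | _, _ => False
  symm := ⟨by rintro (a | a) (b | b) h <;> simp_all <;> exact h.symm⟩
  loopless := ⟨by rintro (a | a) h <;> simp_all⟩

/-- If `G` is triangle-free with min degree `δ`, `|U| = 2r` with `r ≥ 4`, and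
the auxiliary distance-2 graph on `U` is a disjoint union of two cycles of length `r`,
then `n ≥ 2·⌈rδ/2⌉`. -/
theorem radius_girth_stmt4 {V : Type*} [Fintype V] (G : SimpleGraph V) (δ r : ℕ)
    (hr : 4 ≤ r) (hfree : G.CliqueFree 3)
    (hδ : ∀ v : V, δ ≤ (G.neighborSet v).ncard)
    (U : Finset V) (hU : U.card = 2 * r)
    (hiso : Nonempty
      (distTwoGraph G (U : Set V) ≃g
        graphDisjUnion (SimpleGraph.cycleGraph r) (SimpleGraph.cycleGraph r))) :
    2 * ((r * δ + 1) / 2) ≤ Fintype.card V := by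
  classical
  obtain ⟨m, rfl⟩ : ∃ m, r = m + 4 := ⟨r - 4, by omega⟩
  obtain ⟨e⟩ := hiso
  set r := m + 4 with hrdef
  have key : ∀ (u v : ↥(U : Set V)) (w : V), u ≠ v → G.Adj w u.1 → G.Adj w v.1 →
      (graphDisjUnion (cycleGraph r) (cycleGraph r)).Adj (e u) (e v) := by
    intro u v w hne h1 h2
    have hd : G.dist u.1 v.1 = 2 :=
      common_nbr_dist_two G hfree (Subtype.coe_injective.ne hne) h1 h2
    exact e.map_adj_iff.mpr hd
  -- the two sides
  let A : Finset ↥(U : Set V) := univ.filter (fun u => (e u).isLeft)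
  let B : Finset ↥(U : Set V) := univ.filter (fun u => (e u).isRight)
  have hAcard : A.card = r := by
    rw [← Fintype.card_fin r, ← Finset.card_univ]
    refine (Finset.card_bij (fun (i : Fin r) _ => e.symm (Sum.inl i)) ?_ ?_ ?_).symm
    · intro i _
      simp [A]
    · intro i _ j _ h
      have := e.symm.injective h
      simpa using this
    · intro u hu
      simp only [A, Finset.mem_filter] at hu
      obtain ⟨i, hi⟩ := Sum.isLeft_iff.mp hu.2
      refine ⟨i, Finset.mem_univ i, ?_⟩
      show e.symm (Sum.inl i) = u
      rw [← hi]
      exact e.symm_apply_apply u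
  have hBcard : B.card = r := by
    rw [← Fintype.card_fin r, ← Finset.card_univ]
    refine (Finset.card_bij (fun (i : Fin r) _ => e.symm (Sum.inr i)) ?_ ?_ ?_).symm
    · intro i _
      simp [B]
    · intro i _ j _ h
      have := e.symm.injective h
      simpa using this
    · intro u hu
      simp only [B, Finset.mem_filter] at hu
      obtain ⟨i, hi⟩ := Sum.isRight_iff.mp hu.2
      refine ⟨i, Finset.mem_univ i, ?_⟩
      show e.symm (Sum.inr i) = u
      rw [← hi]
      exact e.symm_apply_apply u
  -- double counting
  have degsum : ∀ S : Finset ↥(U : Set V),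
      ∑ u ∈ S, (G.neighborFinset u.1).card
        = ∑ w : V, (S.filter (fun u => G.Adj w u.1)).card := by
    intro S
    have h1 : ∀ u : ↥(U : Set V), (G.neighborFinset u.1).card
        = ∑ w : V, if G.Adj w u.1 then 1 else 0 := by
      intro u
      rw [← Finset.card_filter]
      congr 1
      ext w
      simp only [SimpleGraph.mem_neighborFinset, Finset.mem_filter, Finset.mem_univ, true_and]
      exact SimpleGraph.adj_comm _ _ _
    simp_rw [h1]
    rw [Finset.sum_comm]
    exact Finset.sum_congr rfl fun w _ => (Finset.card_filter _ _).symm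
  -- filtered sets have size at most 2
  have bound : ∀ (w : V) (S : Finset ↥(U : Set V)),
      ((∀ u ∈ S, (e u).isLeft) ∨ (∀ u ∈ S, (e u).isRight)) →
      (S.filter (fun u => G.Adj w u.1)).card ≤ 2 := by
    intro w S hS
    by_contra h
    push_neg at h
    obtain ⟨a, ha, b, hb, c, hc, hab, hac, hbc⟩ := Finset.two_lt_card.mp h
    simp only [Finset.mem_filter] at ha hb hc
    have Hab := key a b w hab ha.2 hb.2
    have Hac := key a c w hac ha.2 hc.2
    have Hbc := key b c w hbc hb.2 hc.2
    rcases hS with hS | hS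
    · obtain ⟨a', ha'⟩ := Sum.isLeft_iff.mp (hS a ha.1)
      obtain ⟨b', hb'⟩ := Sum.isLeft_iff.mp (hS b hb.1)
      obtain ⟨c', hc'⟩ := Sum.isLeft_iff.mp (hS c hc.1)
      rw [ha', hb'] at Hab; rw [ha', hc'] at Hac; rw [hb', hc'] at Hbc
      exact cycle_no_triangle m Hab Hac Hbc
    · obtain ⟨a', ha'⟩ := Sum.isRight_iff.mp (hS a ha.1)
      obtain ⟨b', hb'⟩ := Sum.isRight_iff.mp (hS b hb.1)
      obtain ⟨c', hc'⟩ := Sum.isRight_iff.mp (hS c hc.1)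
      rw [ha', hb'] at Hab; rw [ha', hc'] at Hac; rw [hb', hc'] at Hbc
      exact cycle_no_triangle m Hab Hac Hbc
  -- covered vertex sets
  let WA : Finset V := univ.filter (fun w => ∃ u ∈ A, G.Adj w u.1)
  let WB : Finset V := univ.filter (fun w => ∃ u ∈ B, G.Adj w u.1)
  have hWA : r * δ ≤ 2 * WA.card := by
    have h1 : r * δ ≤ ∑ u ∈ A, (G.neighborFinset u.1).card := by
      calc r * δ = ∑ _u ∈ A, δ := by rw [Finset.sum_const, hAcard, smul_eq_mul]
        _ ≤ _ := by
          refine Finset.sum_le_sum fun u _ => ?_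
          have := hδ u.1
          rwa [Set.ncard_eq_toFinset_card'] at this
    rw [degsum A] at h1
    have h2 : ∑ w : V, (A.filter (fun u => G.Adj w u.1)).card
        = ∑ w ∈ WA, (A.filter (fun u => G.Adj w u.1)).card := by
      refine (Finset.sum_subset (Finset.subset_univ WA) ?_).symm
      intro w _ hw
      simp only [WA, Finset.mem_filter, Finset.mem_univ, true_and, not_exists] at hw
      rw [Finset.card_eq_zero, Finset.filter_eq_empty_iff]
      intro u hu
      exact fun hadj => hw u ⟨hu, hadj⟩
    rw [h2] at h1
    calc r * δ ≤ ∑ w ∈ WA, (A.filter (fun u => G.Adj w u.1)).card := h1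
      _ ≤ ∑ _w ∈ WA, 2 := by
          refine Finset.sum_le_sum fun w _ => ?_
          exact bound w A (Or.inl (fun u hu => (Finset.mem_filter.mp hu).2))
      _ = 2 * WA.card := by rw [Finset.sum_const, smul_eq_mul, mul_comm]
  have hWB : r * δ ≤ 2 * WB.card := by
    have h1 : r * δ ≤ ∑ u ∈ B, (G.neighborFinset u.1).card := by
      calc r * δ = ∑ _u ∈ B, δ := by rw [Finset.sum_const, hBcard, smul_eq_mul]
        _ ≤ _ := by
          refine Finset.sum_le_sum fun u _ => ?_
          have := hδ u.1
          rwa [Set.ncard_eq_toFinset_card'] at this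
    rw [degsum B] at h1
    have h2 : ∑ w : V, (B.filter (fun u => G.Adj w u.1)).card
        = ∑ w ∈ WB, (B.filter (fun u => G.Adj w u.1)).card := by
      refine (Finset.sum_subset (Finset.subset_univ WB) ?_).symm
      intro w _ hw
      simp only [WB, Finset.mem_filter, Finset.mem_univ, true_and, not_exists] at hw
      rw [Finset.card_eq_zero, Finset.filter_eq_empty_iff]
      intro u hu
      exact fun hadj => hw u ⟨hu, hadj⟩
    rw [h2] at h1
    calc r * δ ≤ ∑ w ∈ WB, (B.filter (fun u => G.Adj w u.1)).card := h1
      _ ≤ ∑ _w ∈ WB, 2 := by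
          refine Finset.sum_le_sum fun w _ => ?_
          exact bound w B (Or.inr (fun u hu => (Finset.mem_filter.mp hu).2))
      _ = 2 * WB.card := by rw [Finset.sum_const, smul_eq_mul, mul_comm]
  -- disjointness
  have hdisj : Disjoint WA WB := by
    rw [Finset.disjoint_left]
    intro w hwA hwB
    simp only [WA, WB, Finset.mem_filter, Finset.mem_univ, true_and] at hwA hwB
    obtain ⟨u, hu, hadjU⟩ := hwA
    obtain ⟨v, hv, hadjV⟩ := hwB
    simp only [A, B, Finset.mem_filter, Finset.mem_univ, true_and] at hu hv
    have hne : u ≠ v := by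
      intro h
      rw [h] at hu
      exact (Sum.not_isLeft.mpr hv) hu
    have hadj := key u v w hne hadjU hadjV
    obtain ⟨u', hu'⟩ := Sum.isLeft_iff.mp hu
    obtain ⟨v', hv'⟩ := Sum.isRight_iff.mp hv
    rw [hu', hv'] at hadj
    exact hadj
  have hcard : WA.card + WB.card ≤ Fintype.card V := by
    rw [← Finset.card_union_of_disjoint hdisj]
    exact (Finset.card_le_univ _).trans_eq Finset.card_univ
  omega
end

section
/- Every connected triangle-free simple graph on n vertices with minimum degree δ ≥ 2 and radius exactly 3 satisfies n ≥ 2δ + 2. -/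
/-- The eccentricity of a vertex: the maximum distance to any other vertex. -/
noncomputable def eccentricity {V : Type*} (G : SimpleGraph V) (v : V) : ℕ :=
  ⨆ w, G.dist v w

/-- The radius of a graph: the minimum eccentricity over all vertices. -/
noncomputable def graphRadius {V : Type*} (G : SimpleGraph V) : ℕ :=
  ⨅ v, eccentricity G v

/-- Every connected triangle-free graph on `n` vertices with
minimum degree `δ ≥ 2` and radius exactly `3` satisfies `n ≥ 2δ + 2`. -/
theorem radius_girth_stmt7 {V : Type*} [Fintype V] (G : SimpleGraph V) (δ : ℕ)
    (hconn : G.Connected) (hfree : G.CliqueFree 3) (hδ2 : 2 ≤ δ)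
    (hδ : ∀ v : V, δ ≤ (G.neighborSet v).ncard)
    (hrad : graphRadius G = 3) :
    2 * δ + 2 ≤ Fintype.card V := by
  classical
  haveI hne : Nonempty V := hconn.nonempty
  obtain ⟨u⟩ := id hne
  -- eccentricity of u is at least 3
  have hecc : 3 ≤ eccentricity G u := by
    rw [← hrad]
    exact ciInf_le (OrderBot.bddBelow _) u
  -- there is a vertex w with dist u w ≥ 3
  obtain ⟨w, hw⟩ : ∃ w, 3 ≤ G.dist u w := by
    obtain ⟨w, hwmax⟩ := Finite.exists_max (fun w => G.dist u w)
    refine ⟨w, le_trans hecc ?_⟩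
    exact ciSup_le hwmax
  have huw : u ≠ w := by
    intro h; subst h; simp [SimpleGraph.dist_self] at hw
  have hnadj : ¬ G.Adj u w := by
    intro h
    have := (SimpleGraph.dist_eq_one_iff_adj).2 h
    omega
  set A := G.neighborFinset u with hA
  set B := G.neighborFinset w with hB
  have hcardA : δ ≤ A.card := by
    have := hδ u
    have heq : (A : Set V) = G.neighborSet u := by ext x; simp [hA]
    rwa [← heq, Set.ncard_coe_finset] at this
  have hcardB : δ ≤ B.card := by
    have := hδ w
    have heq : (B : Set V) = G.neighborSet w := by ext x; simp [hB]
    rwa [← heq, Set.ncard_coe_finset] at this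
  have hdisjAB : Disjoint A B := by
    rw [Finset.disjoint_left]
    intro x hx hx'
    rw [hA, SimpleGraph.mem_neighborFinset] at hx
    rw [hB, SimpleGraph.mem_neighborFinset] at hx'
    have h1 : G.dist u x = 1 := (SimpleGraph.dist_eq_one_iff_adj).2 hx
    have h2 : G.dist x w = 1 := (SimpleGraph.dist_eq_one_iff_adj).2 hx'.symm
    have := hconn.dist_triangle (u := u) (v := x) (w := w)
    omega
  have huA : u ∉ A := by simp [hA]
  have huB : u ∉ B := by
    simp only [hB, SimpleGraph.mem_neighborFinset]
    exact fun h => hnadj h.symm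
  have hwA : w ∉ A := by
    simp only [hA, SimpleGraph.mem_neighborFinset]
    exact hnadj
  have hwB : w ∉ B := by simp [hB]
  have hdisj2 : Disjoint (A ∪ B) ({u, w} : Finset V) := by
    rw [Finset.disjoint_right]
    intro x hx hx'
    rcases Finset.mem_insert.1 hx with h | h
    · subst h; rcases Finset.mem_union.1 hx' with h | h
      · exact huA h
      · exact huB h
    · rw [Finset.mem_singleton] at h; subst h
      rcases Finset.mem_union.1 hx' with h | h
      · exact hwA h
      · exact hwB h
  have hcard : (A ∪ B ∪ {u, w}).card = A.card + B.card + 2 := by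
    rw [Finset.card_union_of_disjoint hdisj2, Finset.card_union_of_disjoint hdisjAB,
      Finset.card_pair huw]
  have := Finset.card_le_univ (A ∪ B ∪ {u, w})
  rw [hcard] at this
  omega
end

section
/- For any integers δ ≥ 2 and n ≥ 2δ + 2, there exists a connected triangle-free simple graph on n vertices with minimum degree δ and radius 3. -/
open SimpleGraph

/-- Adjacency relation (on raw values) for the construction. -/
def myAdj (δ a b : ℕ) : Prop :=
  (a ≤ δ ∧ δ < b ∧ a + δ + 1 ≠ b ∧ (a = δ → b ≤ 2 * δ)) ∨
  (b ≤ δ ∧ δ < a ∧ b + δ + 1 ≠ a ∧ (b = δ → a ≤ 2 * δ))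

def myGraph (δ n : ℕ) : SimpleGraph (Fin n) where
  Adj a b := myAdj δ a.val b.val
  symm := ⟨fun a b h => Or.symm h⟩
  loopless := ⟨fun a h => by unfold myAdj at h; omega⟩

lemma myGraph_adj {δ n : ℕ} {a b : Fin n} :
    (myGraph δ n).Adj a b ↔ myAdj δ a.val b.val := Iff.rfl

lemma short_walk {V : Type*} {G : SimpleGraph V} {u v : V} (p : G.Walk u v) (h : p.length ≤ 2) :
    u = v ∨ G.Adj u v ∨ ∃ x, G.Adj u x ∧ G.Adj x v := by
  match p with
  | Walk.nil => exact Or.inl rfl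
  | Walk.cons h1 Walk.nil => exact Or.inr (Or.inl h1)
  | Walk.cons h1 (Walk.cons h2 q) =>
    simp only [Walk.length_cons] at h
    have hq : q.length = 0 := by omega
    have := Walk.eq_of_length_eq_zero hq
    subst this
    exact Or.inr (Or.inr ⟨_, h1, h2⟩)

lemma three_le_dist {V : Type*} {G : SimpleGraph V} {u v : V} (hr : G.Reachable u v)
    (hne : u ≠ v) (hadj : ¬G.Adj u v)
    (h2 : ∀ x, ¬(G.Adj u x ∧ G.Adj x v)) : 3 ≤ G.dist u v := by
  by_contra h
  push_neg at h
  obtain ⟨p, hp⟩ := hr.exists_walk_length_eq_dist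
  rcases short_walk p (by omega) with h' | h' | ⟨x, hx1, hx2⟩
  · exact hne h'
  · exact hadj h'
  · exact h2 x ⟨hx1, hx2⟩

/-- For `δ ≥ 2` and `n ≥ 2δ + 2` there is a connected triangle-free graph
on `n` vertices with minimum degree `δ` and radius `3`. -/
theorem radius_girth_stmt9 (δ n : ℕ) (hδ : 2 ≤ δ) (hn : 2 * δ + 2 ≤ n) :
    ∃ G : SimpleGraph (Fin n), G.Connected ∧ G.CliqueFree 3 ∧
      (∀ v, δ ≤ (G.neighborSet v).ncard) ∧ graphRadius G = 3 := by
  classical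
  haveI : Nonempty (Fin n) := ⟨⟨0, by omega⟩⟩
  have hn6 : 6 ≤ n := by omega
  set G := myGraph δ n with hG
  -- walks from vertex 0 of length ≤ 3 to every vertex
  have walk0 : ∀ v : Fin n, ∃ p : G.Walk ⟨0, by omega⟩ v, p.length ≤ 3 := by
    intro v
    obtain ⟨vv, hv⟩ := v
    by_cases h0 : vv = 0
    · subst h0; exact ⟨Walk.nil, by simp⟩
    by_cases h1 : vv ≤ δ
    · rcases eq_or_ne vv 1 with h2 | h2
      · refine ⟨Walk.cons (v := ⟨δ + 3, by omega⟩) ?_ (Walk.cons ?_ Walk.nil), ?_⟩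
        · show myAdj δ 0 (δ + 3); unfold myAdj; omega
        · show myAdj δ (δ + 3) vv; unfold myAdj; omega
        · simp
      · refine ⟨Walk.cons (v := ⟨δ + 2, by omega⟩) ?_ (Walk.cons ?_ Walk.nil), ?_⟩
        · show myAdj δ 0 (δ + 2); unfold myAdj; omega
        · show myAdj δ (δ + 2) vv; unfold myAdj; omega
        · simp
    by_cases h2 : vv = δ + 1
    · refine ⟨Walk.cons (v := ⟨δ + 3, by omega⟩) ?_
        (Walk.cons (v := ⟨1, by omega⟩) ?_ (Walk.cons ?_ Walk.nil)), ?_⟩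
      · show myAdj δ 0 (δ + 3); unfold myAdj; omega
      · show myAdj δ (δ + 3) 1; unfold myAdj; omega
      · show myAdj δ 1 vv; unfold myAdj; omega
      · simp
    · refine ⟨Walk.cons ?_ Walk.nil, ?_⟩
      · show myAdj δ 0 vv; unfold myAdj; omega
      · simp
  have hconn : G.Connected := by
    rw [connected_iff]
    refine ⟨fun u v => ?_, ⟨⟨0, by omega⟩⟩⟩
    obtain ⟨p, _⟩ := walk0 u
    obtain ⟨q, _⟩ := walk0 v
    exact (Walk.reachable p).symm.trans (Walk.reachable q)
  -- triangle-free via 2-coloring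
  have hcf : G.CliqueFree 3 := by
    have hcol : G.Colorable 2 := by
      refine ⟨Coloring.mk (fun v => if v.val ≤ δ then 0 else 1) ?_⟩
      intro v w hvw
      rw [myGraph_adj] at hvw
      unfold myAdj at hvw
      rcases hvw with ⟨h1, h2, _⟩ | ⟨h1, h2, _⟩ <;>
        simp [h1, Nat.not_le.2 h2]
    exact hcol.cliqueFree (by norm_num)
  -- minimum degree
  have hdeg : ∀ v : Fin n, δ ≤ (G.neighborSet v).ncard := by
    intro v
    have key : ∃ f : ℕ → Fin n, Set.InjOn f (Finset.range δ) ∧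
        ∀ k < δ, G.Adj v (f k) := by
      by_cases hA : v.val ≤ δ
      · by_cases hE : v.val = δ
        · refine ⟨fun k => ⟨δ + 1 + min k (δ - 1), by omega⟩, ?_, ?_⟩
          · intro a ha b hb h
            simp only [Finset.coe_range, Set.mem_Iio] at ha hb
            simp only [Fin.mk.injEq] at h
            omega
          · intro k hk
            show myAdj δ v.val (δ + 1 + min k (δ - 1))
            unfold myAdj; omega
        · refine ⟨fun k => ⟨δ + 1 + min (if k < v.val then k else k + 1) δ,
            by have := min_le_right (if k < v.val then k else k + 1) δ; omega⟩, ?_, ?_⟩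
          · intro a ha b hb h
            simp only [Finset.coe_range, Set.mem_Iio] at ha hb
            simp only [Fin.mk.injEq] at h
            split_ifs at h <;> omega
          · intro k hk
            show myAdj δ v.val (δ + 1 + min (if k < v.val then k else k + 1) δ)
            unfold myAdj; split_ifs <;> omega
      · refine ⟨fun k => ⟨min (if k < v.val - (δ + 1) then k else k + 1) δ,
          by have := min_le_right (if k < v.val - (δ + 1) then k else k + 1) δ; omega⟩, ?_, ?_⟩
        · intro a ha b hb h
          simp only [Finset.coe_range, Set.mem_Iio] at ha hb
          simp only [Fin.mk.injEq] at h
          split_ifs at h <;> omega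
        · intro k hk
          show myAdj δ v.val (min (if k < v.val - (δ + 1) then k else k + 1) δ)
          unfold myAdj
          have hv := v.isLt
          split_ifs <;> omega
    obtain ⟨f, hinj, hmem⟩ := key
    have hS : (((Finset.range δ).image f : Finset (Fin n)) : Set (Fin n)) ⊆ G.neighborSet v := by
      intro x hx
      simp only [Finset.coe_image, Set.mem_image, Finset.mem_coe, Finset.mem_range] at hx
      obtain ⟨k, hk, rfl⟩ := hx
      exact hmem k hk
    have hcard : ((Finset.range δ).image f).card = δ := by
      rw [Finset.card_image_of_injOn hinj, Finset.card_range]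
    have := Set.ncard_le_ncard hS (Set.toFinite _)
    rwa [Set.ncard_coe_finset, hcard] at this
  -- eccentricity lower bound targets
  have lower : ∀ v : Fin n, ∃ w : Fin n, v ≠ w ∧ ¬G.Adj v w ∧
      ∀ x, ¬(G.Adj v x ∧ G.Adj x w) := by
    intro v
    have hv := v.isLt
    by_cases hA : v.val ≤ δ
    · refine ⟨⟨v.val + δ + 1, by omega⟩, ?_, ?_, ?_⟩
      · intro h; have := congrArg Fin.val h; simp at this; omega
      · intro h; rw [myGraph_adj] at h; unfold myAdj at h
        simp only [Fin.val_mk] at h; omega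
      · rintro x ⟨h1, h2⟩
        rw [myGraph_adj] at h1 h2; unfold myAdj at h1 h2
        simp only [Fin.val_mk] at h1 h2; omega
    · refine ⟨⟨min (v.val - (δ + 1)) δ, by omega⟩, ?_, ?_, ?_⟩
      · intro h; have := congrArg Fin.val h; simp at this; omega
      · intro h; rw [myGraph_adj] at h; unfold myAdj at h
        simp only [Fin.val_mk] at h; omega
      · rintro x ⟨h1, h2⟩
        rw [myGraph_adj] at h1 h2; unfold myAdj at h1 h2
        simp only [Fin.val_mk] at h1 h2; omega
  -- eccentricity bounds
  have hd0 : ∀ w : Fin n, G.dist ⟨0, by omega⟩ w ≤ 3 := by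
    intro w
    obtain ⟨p, hp⟩ := walk0 w
    exact (SimpleGraph.dist_le p).trans hp
  have hecc0 : eccentricity G ⟨0, by omega⟩ ≤ 3 := ciSup_le hd0
  have hecc_ge : ∀ v : Fin n, 3 ≤ eccentricity G v := by
    intro v
    obtain ⟨w, hne, hnadj, hcn⟩ := lower v
    have h3 : 3 ≤ G.dist v w :=
      three_le_dist (hconn.preconnected v w) hne hnadj (fun x => hcn x)
    have h4 : G.dist v w ≤ eccentricity G v :=
      le_ciSup (Set.Finite.bddAbove (Set.finite_range _)) w
    omega
  refine ⟨G, hconn, hcf, hdeg, le_antisymm ?_ ?_⟩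
  · exact le_trans (ciInf_le (OrderBot.bddBelow _) ⟨0, by omega⟩) hecc0
  · exact le_ciInf hecc_ge
end

section
/- Let r ≥ 4, δ ≥ 2, and c ≥ 0 be integers. Then there exists a connected triangle-free simple graph with n = 2⌈rδ/2⌉ + c vertices, minimum degree δ, and radius exactly r. -/
namespace RG10

variable {N : ℕ}

/-- cyclic distance on `ZMod N` -/
def cd (N : ℕ) (i j : ZMod N) : ℕ := min (j - i).val (i - j).val

lemma cd_comm (i j : ZMod N) : cd N i j = cd N j i := min_comm _ _

lemma cd_self (i : ZMod N) : cd N i i = 0 := by simp [cd]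

lemma cd_eq_zero_iff [NeZero N] {i j : ZMod N} : cd N i j = 0 ↔ i = j := by
  constructor
  · intro h
    rcases Nat.min_eq_zero_iff.mp h with h | h
    · rw [ZMod.val_eq_zero, sub_eq_zero] at h; exact h.symm
    · rw [ZMod.val_eq_zero, sub_eq_zero] at h; exact h
  · rintro rfl; exact cd_self i

lemma vals_sum [NeZero N] {i j : ZMod N} (h : i ≠ j) :
    (j - i).val + (i - j).val = N := by
  have h1 : i - j = -(j - i) := by ring
  have h2 : j - i ≠ 0 := sub_ne_zero.mpr (Ne.symm h)
  rw [h1, ZMod.neg_val, if_neg h2]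
  have := ZMod.val_lt (j - i)
  have : 1 ≤ (j - i).val := by
    rcases Nat.eq_zero_or_pos (j - i).val with h' | h'
    · exact absurd ((ZMod.val_eq_zero _).mp h') h2
    · omega
  omega

lemma cd_le_half [NeZero N] (i j : ZMod N) : 2 * cd N i j ≤ N := by
  by_cases h : i = j
  · subst h; simp [cd_self]
  · have h1 := vals_sum h
    have h2 : cd N i j ≤ (j - i).val := min_le_left _ _
    have h3 : cd N i j ≤ (i - j).val := min_le_right _ _
    omega

lemma val_add_disj [NeZero N] (x y : ZMod N) :
    (x + y).val = x.val + y.val ∨ (x + y).val + N = x.val + y.val := by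
  have h := ZMod.val_add x y
  have hx := ZMod.val_lt x
  have hy := ZMod.val_lt y
  rcases Nat.lt_or_ge (x.val + y.val) N with h' | h'
  · left; rw [h, Nat.mod_eq_of_lt h']
  · right; rw [h, Nat.mod_eq_sub_mod h', Nat.mod_eq_of_lt (by omega)]; omega

lemma val_neg_sum [NeZero N] (x : ZMod N) :
    x.val + (-x).val = 0 ∨ x.val + (-x).val = N := by
  by_cases h : x = 0
  · subst h; simp
  · right
    rw [ZMod.neg_val, if_neg h]
    have h1 := ZMod.val_lt x
    have h2 : x.val ≠ 0 := fun hc => h ((ZMod.val_eq_zero x).mp hc)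
    omega

lemma cd_triangle [NeZero N] (i j k : ZMod N) : cd N i k ≤ cd N i j + cd N j k := by
  have e1 : (j - i) + (k - j) = k - i := by ring
  have e2 : (-(j - i)) + (-(k - j)) = i - k := by ring
  have h1 := val_add_disj (j - i) (k - j)
  have h2 := val_add_disj (-(j - i)) (-(k - j))
  rw [e1] at h1
  rw [e2] at h2
  have h3 := val_neg_sum (j - i)
  have h4 := val_neg_sum (k - j)
  rw [cd, cd, cd, show i - j = -(j - i) by ring, show j - k = -(k - j) by ring]
  have := ZMod.val_lt (k - i)
  have := ZMod.val_lt (i - k)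
  have := ZMod.val_lt (j - i)
  have := ZMod.val_lt (k - j)
  omega

lemma one_val [NeZero N] (hN : 8 ≤ N) : (1 : ZMod N).val = 1 := ZMod.val_one'' (by omega)

lemma one_ne_zero' [NeZero N] (hN : 8 ≤ N) : (1 : ZMod N) ≠ 0 := by
  intro hc
  have := congrArg ZMod.val hc
  rw [one_val hN, ZMod.val_zero] at this
  exact one_ne_zero this

lemma neg_one_val [NeZero N] (hN : 8 ≤ N) : (-1 : ZMod N).val = N - 1 := by
  rw [ZMod.neg_val, if_neg (one_ne_zero' hN), one_val hN]

lemma cd_one [NeZero N] (hN : 8 ≤ N) {x y : ZMod N} (h : y - x = 1 ∨ x - y = 1) :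
    cd N x y = 1 := by
  have h1 := one_val (N := N) hN
  have hneg := neg_one_val (N := N) hN
  rcases h with h | h
  · have hxy : x - y = -1 := by rw [← h]; ring
    rw [cd, h, hxy, h1, hneg]; omega
  · have hyx : y - x = -1 := by rw [← h]; ring
    rw [cd, h, hyx, h1, hneg]; omega

lemma cd_eq_one_imp [NeZero N] (hN : 8 ≤ N) {x y : ZMod N} (h : cd N x y = 1) :
    y - x = 1 ∨ x - y = 1 := by
  have h1 : (y - x).val = 1 ∨ (x - y).val = 1 := by rw [cd] at h; omega
  rcases h1 with h1 | h1
  · left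
    apply ZMod.val_injective
    rw [h1, one_val hN]
  · right
    apply ZMod.val_injective
    rw [h1, one_val hN]

lemma val_pos_of_ne_zero [NeZero N] {x : ZMod N} (hx : x ≠ 0) : 1 ≤ x.val := by
  rcases Nat.eq_zero_or_pos x.val with h' | h'
  · exact absurd ((ZMod.val_eq_zero x).mp h') hx
  · omega

lemma val_sub_one [NeZero N] (hN : 8 ≤ N) {x : ZMod N} (hx : x ≠ 0) :
    (x - 1).val = x.val - 1 := by
  have h1 := val_add_disj x (-1)
  rw [neg_one_val hN] at h1
  have h2 := ZMod.val_lt (x + -1)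
  have h3 := ZMod.val_lt x
  have h4 := val_pos_of_ne_zero hx
  rw [show x - 1 = x + -1 by ring]
  omega

lemma cd_step [NeZero N] (hN : 8 ≤ N) {i j : ZMod N} (h : 1 ≤ cd N i j) :
    ∃ i' : ZMod N, (i' - i = 1 ∨ i - i' = 1) ∧ cd N i' j + 1 = cd N i j := by
  have hij : i ≠ j := by
    intro e; rw [e, cd_self] at h; omega
  have hsum := vals_sum hij
  have hji0 : j - i ≠ 0 := sub_ne_zero.mpr (Ne.symm hij)
  have hij0 : i - j ≠ 0 := sub_ne_zero.mpr hij
  rcases le_or_gt (j - i).val (i - j).val with hle | hlt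
  · refine ⟨i + 1, Or.inl (by ring), ?_⟩
    have e1 : j - (i + 1) = (j - i) - 1 := by ring
    have hv1 : (j - (i + 1)).val = (j - i).val - 1 := by
      rw [e1, val_sub_one hN hji0]
    by_cases hz : j - (i + 1) = 0
    · have hj : j = i + 1 := by
        have := sub_eq_zero.mp hz; exact this
      rw [hj, cd_self, cd_one hN (Or.inl (show (i + 1) - i = 1 by ring))]
    · have hv2 : ((i + 1) - j).val = N - ((j - i).val - 1) := by
        rw [show (i + 1) - j = -(j - (i + 1)) by ring, ZMod.neg_val, if_neg hz, hv1]
      have h5 : (j - (i + 1)).val ≠ 0 := fun hc => hz ((ZMod.val_eq_zero _).mp hc)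
      rw [hv1] at h5
      have h6 := val_pos_of_ne_zero hji0
      rw [cd, cd, hv1, hv2]
      omega
  · refine ⟨i - 1, Or.inr (by ring), ?_⟩
    have e1 : (i - 1) - j = (i - j) - 1 := by ring
    have hv1 : ((i - 1) - j).val = (i - j).val - 1 := by
      rw [e1, val_sub_one hN hij0]
    by_cases hz : (i - 1) - j = 0
    · have hij2 : i - j = 1 := by
        rw [e1] at hz
        exact sub_eq_zero.mp hz
      have hj : j = i - 1 := by rw [← hij2]; ring
      rw [hj, cd_self, cd_one hN (Or.inr (show i - (i - 1) = 1 by ring))]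
    · have hv2 : (j - (i - 1)).val = N - ((i - j).val - 1) := by
        rw [show j - (i - 1) = -((i - 1) - j) by ring, ZMod.neg_val, if_neg hz, hv1]
      have h5 : ((i - 1) - j).val ≠ 0 := fun hc => hz ((ZMod.val_eq_zero _).mp hc)
      rw [hv1] at h5
      have h6 := val_pos_of_ne_zero hij0
      rw [cd, cd, hv1, hv2]
      omega

def aa (δ : ℕ) : ℕ := (δ + 1) / 2
def bb (δ : ℕ) : ℕ := δ / 2
def offv (δ s : ℕ) : ℕ :=
  if s = 0 then 0 else if s = 1 then aa δ else if s = 2 then 2 * aa δ else 2 * aa δ + bb δ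
def bsize (δ m : ℕ) : ℕ := if m % 4 < 2 then aa δ else bb δ
def startOf (δ m : ℕ) : ℕ := 2 * δ * (m / 4) + offv δ (m % 4)
def hh (δ t : ℕ) : ℕ :=
  if t < aa δ then 0 else if t < 2 * aa δ then 1 else if t < 2 * aa δ + bb δ then 2 else 3
def g (δ k : ℕ) : ℕ := 4 * (k / (2 * δ)) + hh δ (k % (2 * δ))
abbrev T (r δ : ℕ) : ℕ := 2 * ((r * δ + 1) / 2)

lemma ab_facts (δ : ℕ) (hδ : 2 ≤ δ) :
    aa δ + bb δ = δ ∧ 1 ≤ bb δ ∧ bb δ ≤ aa δ ∧ aa δ ≤ bb δ + 1 ∧ 2 * aa δ = δ + δ % 2 := by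
  unfold aa bb; omega

lemma bsize_pos (δ : ℕ) (hδ : 2 ≤ δ) (m : ℕ) : 1 ≤ bsize δ m := by
  have := ab_facts δ hδ
  unfold bsize; split_ifs <;> omega

lemma offv_add_lt (δ : ℕ) (hδ : 2 ≤ δ) {m t : ℕ} (ht : t < bsize δ m) :
    offv δ (m % 4) + t < 2 * δ := by
  have hab := ab_facts δ hδ
  have h4 : m % 4 < 4 := Nat.mod_lt _ (by omega)
  unfold bsize at ht
  unfold offv
  split_ifs at * <;> omega

lemma g_startOf (δ : ℕ) (hδ : 2 ≤ δ) (m t : ℕ) (ht : t < bsize δ m) :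
    g δ (startOf δ m + t) = m := by
  have hab := ab_facts δ hδ
  have hu := offv_add_lt δ hδ ht
  have hpos : 0 < 2 * δ := by omega
  have h4 : m % 4 < 4 := Nat.mod_lt _ (by omega)
  rw [g, startOf]
  have hd : (2 * δ * (m / 4) + offv δ (m % 4) + t) / (2 * δ) = m / 4 := by
    rw [add_assoc, Nat.mul_add_div hpos]
    rw [Nat.div_eq_of_lt hu, add_zero]
  have hm : (2 * δ * (m / 4) + offv δ (m % 4) + t) % (2 * δ) = offv δ (m % 4) + t := by
    rw [add_assoc, Nat.mul_add_mod, Nat.mod_eq_of_lt hu]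
  rw [hd, hm]
  have : hh δ (offv δ (m % 4) + t) = m % 4 := by
    unfold bsize at ht
    unfold offv at *
    unfold hh
    split_ifs at * <;> omega
  rw [this]
  omega

lemma T_eq (r δ : ℕ) : T r δ = r * δ + (r * δ) % 2 := by
  unfold T; omega

lemma startOf_add_lt (r δ : ℕ) (hδ : 2 ≤ δ) {m t : ℕ}
    (hm : m < 2 * r) (ht : t < bsize δ m) : startOf δ m + t < T r δ := by
  have hab := ab_facts δ hδ
  have hu := offv_add_lt δ hδ ht
  have hT := T_eq r δ
  have hqm : 4 * (m / 4) + m % 4 = m := Nat.div_add_mod m 4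
  rw [startOf]
  rcases Nat.even_or_odd r with ⟨e, he⟩ | ⟨e, he⟩
  · have hq : m / 4 + 1 ≤ e := by omega
    have h1 : 2 * δ * (m / 4 + 1) ≤ 2 * δ * e := Nat.mul_le_mul_left _ hq
    have h2 : 2 * δ * (m / 4 + 1) = 2 * δ * (m / 4) + 2 * δ := by ring
    have h3 : 2 * δ * e = r * δ := by rw [he]; ring
    omega
  · have he' : r = 2 * e + 1 := by omega
    have hrδ : r * δ = 2 * (δ * e) + δ := by rw [he']; ring
    by_cases hs : m % 4 ≤ 1
    · have hq : m / 4 ≤ e := by omega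
      have h1 : 2 * δ * (m / 4) ≤ 2 * δ * e := Nat.mul_le_mul_left _ hq
      have h2 : 2 * δ * e = 2 * (δ * e) := by ring
      have h2a : offv δ (m % 4) + t < 2 * aa δ := by
        unfold bsize at ht
        unfold offv
        split_ifs at * <;> omega
      omega
    · have hq : m / 4 + 1 ≤ e := by omega
      have h1 : 2 * δ * (m / 4 + 1) ≤ 2 * δ * e := Nat.mul_le_mul_left _ hq
      have h2 : 2 * δ * (m / 4 + 1) = 2 * δ * (m / 4) + 2 * δ := by ring
      have h3 : 2 * δ * e = 2 * (δ * e) := by ring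
      omega

/-- box assignment of a raw vertex index -/
def fbox (r δ : ℕ) (k : ℕ) : ZMod (2 * r) :=
  if k < T r δ then ((g δ k : ℕ) : ZMod (2 * r)) else 0

end RG10

/-- For integers `r ≥ 4`, `δ ≥ 2`, `c ≥ 0` there is a connected
triangle-free graph with `n = 2⌈rδ/2⌉ + c` vertices, minimum degree `δ` and radius `r`
(note `⌈a/2⌉ = (a+1)/2` in `ℕ`). -/
theorem radius_girth_stmt10 (r δ c : ℕ) (hr : 4 ≤ r) (hδ : 2 ≤ δ) :
    ∃ G : SimpleGraph (Fin (2 * ((r * δ + 1) / 2) + c)), G.Connected ∧ G.CliqueFree 3 ∧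
      (∀ v, δ ≤ (G.neighborSet v).ncard) ∧ graphRadius G = r := by
  classical
  haveI : NeZero (2 * r) := ⟨by omega⟩
  have hN : 8 ≤ 2 * r := by omega
  have hrδ8 : 8 ≤ r * δ := by
    calc 8 = 4 * 2 := rfl
    _ ≤ r * δ := Nat.mul_le_mul hr hδ
  have hTdef : RG10.T r δ = 2 * ((r * δ + 1) / 2) := rfl
  have hTbig : 8 ≤ RG10.T r δ := by rw [RG10.T_eq]; omega
  haveI hne : Nonempty (Fin (2 * ((r * δ + 1) / 2) + c)) := ⟨⟨0, by omega⟩⟩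
  set f : Fin (2 * ((r * δ + 1) / 2) + c) → ZMod (2 * r) :=
    fun v => RG10.fbox r δ v.val with hf
  set G : SimpleGraph (Fin (2 * ((r * δ + 1) / 2) + c)) :=
    SimpleGraph.fromRel (fun v w => f w - f v = 1) with hG
  have hadj : ∀ v w, G.Adj v w ↔ v ≠ w ∧ (f w - f v = 1 ∨ f v - f w = 1) := by
    intro v w; rw [hG]; exact SimpleGraph.fromRel_adj _ v w
  have adj_of : ∀ v w, f w - f v = 1 → G.Adj v w := by
    intro v w h
    refine (hadj v w).mpr ⟨?_, Or.inl h⟩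
    intro e
    rw [e, sub_self] at h
    exact RG10.one_ne_zero' hN h.symm
  have adj_cd : ∀ v w, G.Adj v w → RG10.cd (2 * r) (f v) (f w) = 1 := by
    intro v w h
    exact RG10.cd_one hN ((hadj v w).mp h).2
  -- representative of each box
  have hfval : ∀ (m t : ℕ) (hm : m < 2 * r) (ht : t < RG10.bsize δ m)
      (h' : RG10.startOf δ m + t < 2 * ((r * δ + 1) / 2) + c),
      f ⟨RG10.startOf δ m + t, h'⟩ = ((m : ℕ) : ZMod (2 * r)) := by
    intro m t hm ht h'
    show RG10.fbox r δ (RG10.startOf δ m + t) = _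
    rw [RG10.fbox, if_pos (RG10.startOf_add_lt r δ hδ hm ht),
      RG10.g_startOf δ hδ m t ht]
  have hrep : ∀ j : ZMod (2 * r), ∃ u, f u = j := by
    intro j
    have hm : j.val < 2 * r := ZMod.val_lt j
    have hb := RG10.bsize_pos δ hδ j.val
    have hlt := RG10.startOf_add_lt r δ hδ (t := 0) hm hb
    refine ⟨⟨RG10.startOf δ j.val + 0, by omega⟩, ?_⟩
    rw [hfval j.val 0 hm hb _, ZMod.natCast_zmod_val]
  -- walk lower bound
  have walkb : ∀ (v w : Fin (2 * ((r * δ + 1) / 2) + c)) (p : G.Walk v w),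
      RG10.cd (2 * r) (f v) (f w) ≤ p.length := by
    intro v w p
    induction p with
    | nil => simp [RG10.cd_self]
    | @cons a b d h q ih =>
      rw [SimpleGraph.Walk.length_cons]
      have h1 := RG10.cd_triangle (N := 2 * r) (f a) (f b) (f d)
      have h2 := adj_cd a b h
      omega
  -- walk construction
  have buildw : ∀ d : ℕ, ∀ v w, RG10.cd (2 * r) (f v) (f w) = d + 1 →
      ∃ p : G.Walk v w, p.length = d + 1 := by
    intro d
    induction d with
    | zero =>
      intro v w h
      have h1 := RG10.cd_eq_one_imp hN h
      have hadjvw : G.Adj v w := by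
        rcases h1 with h1 | h1
        · exact adj_of v w h1
        · exact (adj_of w v h1).symm
      exact ⟨hadjvw.toWalk, by simp⟩
    | succ d ih =>
      intro v w h
      have h1 : 1 ≤ RG10.cd (2 * r) (f v) (f w) := by omega
      obtain ⟨i', hi1, hi2⟩ := RG10.cd_step hN h1
      obtain ⟨u, hu⟩ := hrep i'
      have hadjvu : G.Adj v u := by
        rcases hi1 with hi1 | hi1
        · exact adj_of v u (by rw [hu]; exact hi1)
        · exact (adj_of u v (by rw [hu]; exact hi1)).symm
      obtain ⟨q, hq⟩ := ih u w (by rw [hu]; omega)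
      exact ⟨SimpleGraph.Walk.cons hadjvu q, by simp [hq]⟩
  -- connectivity
  have conn : G.Connected := by
    rw [SimpleGraph.connected_iff]
    refine ⟨?_, hne⟩
    intro v w
    by_cases hfvw : f v = f w
    · by_cases hvw : v = w
      · subst hvw; rfl
      · obtain ⟨u, hu⟩ := hrep (f v + 1)
        have h1 : G.Adj v u := adj_of v u (by rw [hu]; ring)
        have h2 : G.Adj w u := adj_of w u (by rw [hu, ← hfvw]; ring)
        exact h1.reachable.trans h2.reachable.symm
    · have h0 : RG10.cd (2 * r) (f v) (f w) ≠ 0 :=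
        fun e => hfvw (RG10.cd_eq_zero_iff.mp e)
      obtain ⟨p, -⟩ := buildw (RG10.cd (2 * r) (f v) (f w) - 1) v w (by omega)
      exact p.reachable
  -- distance equals cyclic distance on distinct boxes
  have hdist_eq : ∀ v w, f v ≠ f w → G.dist v w = RG10.cd (2 * r) (f v) (f w) := by
    intro v w hfvw
    have h0 : RG10.cd (2 * r) (f v) (f w) ≠ 0 :=
      fun e => hfvw (RG10.cd_eq_zero_iff.mp e)
    apply le_antisymm
    · obtain ⟨p, hp⟩ := buildw (RG10.cd (2 * r) (f v) (f w) - 1) v w (by omega)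
      have := SimpleGraph.dist_le p
      omega
    · obtain ⟨p, hp⟩ := (conn.exists_walk_length_eq_dist v w)
      rw [← hp]
      exact walkb v w p
  have hdist_le : ∀ v w, G.dist v w ≤ r := by
    intro v w
    by_cases hvw : v = w
    · subst hvw; rw [SimpleGraph.dist_self]; omega
    · by_cases hfvw : f v = f w
      · obtain ⟨u, hu⟩ := hrep (f v + 1)
        have h1 : G.Adj v u := adj_of v u (by rw [hu]; ring)
        have h2 : G.Adj w u := adj_of w u (by rw [hu, ← hfvw]; ring)
        have hp : (SimpleGraph.Walk.cons h1 (SimpleGraph.Walk.cons h2.symm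
            SimpleGraph.Walk.nil)).length = 2 := by simp
        have := SimpleGraph.dist_le (SimpleGraph.Walk.cons h1
          (SimpleGraph.Walk.cons h2.symm SimpleGraph.Walk.nil))
        omega
      · rw [hdist_eq v w hfvw]
        have := RG10.cd_le_half (f v) (f w)
        omega
  -- eccentricity
  have hecc : ∀ v, eccentricity G v = r := by
    intro v
    apply le_antisymm
    · exact ciSup_le fun w => hdist_le v w
    · obtain ⟨u, hu⟩ := hrep (f v + ((r : ℕ) : ZMod (2 * r)))
      have hrval : ((r : ℕ) : ZMod (2 * r)).val = r := ZMod.val_natCast_of_lt (by omega)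
      have hrne : ((r : ℕ) : ZMod (2 * r)) ≠ 0 := by
        intro e; rw [e, ZMod.val_zero] at hrval; omega
      have hfvu : f v ≠ f u := by
        intro e
        apply hrne
        rw [hu] at e
        linear_combination -e
      have hcd : RG10.cd (2 * r) (f v) (f u) = r := by
        have e1 : f u - f v = ((r : ℕ) : ZMod (2 * r)) := by rw [hu]; ring
        have e2 : f v - f u = -((r : ℕ) : ZMod (2 * r)) := by rw [hu]; ring
        rw [RG10.cd, e1, e2, hrval, ZMod.neg_val, if_neg hrne, hrval]
        omega
      have hdu : G.dist v u = r := by rw [hdist_eq v u hfvu, hcd]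
      have hbdd : BddAbove (Set.range fun w => G.dist v w) := by
        refine ⟨r, ?_⟩
        rintro x ⟨w, rfl⟩
        exact hdist_le v w
      rw [eccentricity]
      calc (r : ℕ) = G.dist v u := hdu.symm
        _ ≤ ⨆ w, G.dist v w := le_ciSup hbdd u
  -- triangle-free
  have hcf : G.CliqueFree 3 := by
    intro s hs
    rw [SimpleGraph.is3Clique_iff] at hs
    obtain ⟨x, y, z, hxy, hxz, hyz, -⟩ := hs
    have hk : ∀ k : ℕ, 1 ≤ k → k ≤ 3 → ((k : ℕ) : ZMod (2 * r)) ≠ 0 := by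
      intro k h1 h2 e
      rw [ZMod.natCast_eq_zero_iff] at e
      have := Nat.le_of_dvd (by omega) e
      omega
    have hA : f y - f x = 1 ∨ f y - f x = -1 := by
      rcases ((hadj x y).mp hxy).2 with h | h
      · exact Or.inl h
      · exact Or.inr (by rw [← h]; ring)
    have hB : f z - f x = 1 ∨ f z - f x = -1 := by
      rcases ((hadj x z).mp hxz).2 with h | h
      · exact Or.inl h
      · exact Or.inr (by rw [← h]; ring)
    have hC : f z - f y = 1 ∨ f z - f y = -1 := by
      rcases ((hadj y z).mp hyz).2 with h | h
      · exact Or.inl h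
      · exact Or.inr (by rw [← h]; ring)
    have key : f z - f x = (f y - f x) + (f z - f y) := by ring
    rcases hA with hA | hA <;> rcases hB with hB | hB <;> rcases hC with hC | hC <;>
      rw [hA, hC] at key <;> rw [hB] at key <;>
      first
        | exact hk 1 (by omega) (by omega) (by push_cast; linear_combination key)
        | exact hk 1 (by omega) (by omega) (by push_cast; linear_combination -key)
        | exact hk 3 (by omega) (by omega) (by push_cast; linear_combination key)
        | exact hk 3 (by omega) (by omega) (by push_cast; linear_combination -key)
  -- minimum degree
  have hdeg : ∀ v, δ ≤ (G.neighborSet v).ncard := by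
    intro v
    have hab := RG10.ab_facts δ hδ
    set i := f v with hi
    have hm1lt : (i - 1).val < 2 * r := ZMod.val_lt _
    have hm2lt : (i + 1).val < 2 * r := ZMod.val_lt _
    have hc1 : (((i - 1).val : ℕ) : ZMod (2 * r)) = i - 1 := ZMod.natCast_zmod_val _
    have hc2 : (((i + 1).val : ℕ) : ZMod (2 * r)) = i + 1 := ZMod.natCast_zmod_val _
    have hk2 : ((2 : ℕ) : ZMod (2 * r)) ≠ 0 := by
      intro e
      rw [ZMod.natCast_eq_zero_iff] at e
      have := Nat.le_of_dvd (by omega) e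
      omega
    have hm12 : (i - 1).val ≠ (i + 1).val := by
      intro e
      apply hk2
      have : i - 1 = i + 1 := by rw [← hc1, ← hc2, e]
      push_cast
      linear_combination -this
    have hval2 : ((2 : ℕ) : ZMod (2 * r)).val = 2 := ZMod.val_natCast_of_lt (by omega)
    have hm2eq : (i + 1).val = ((i - 1).val + 2) % (2 * r) := by
      have e : i + 1 = (i - 1) + ((2 : ℕ) : ZMod (2 * r)) := by push_cast; ring
      rw [e, ZMod.val_add, hval2]
    have hsplit : (i + 1).val = (i - 1).val + 2 ∨
        (2 * r ≤ (i - 1).val + 2 ∧ (i + 1).val = (i - 1).val + 2 - 2 * r) := by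
      rcases Nat.lt_or_ge ((i - 1).val + 2) (2 * r) with h' | h'
      · left; rw [hm2eq, Nat.mod_eq_of_lt h']
      · right
        refine ⟨h', ?_⟩
        rw [hm2eq, Nat.mod_eq_sub_mod h', Nat.mod_eq_of_lt (by omega)]
    have hsz : δ ≤ RG10.bsize δ (i - 1).val + RG10.bsize δ (i + 1).val := by
      unfold RG10.bsize
      split_ifs <;> omega
    -- injective map into the neighbor set
    have hlt1 : ∀ t : ℕ, t < RG10.bsize δ (i - 1).val →
        RG10.startOf δ (i - 1).val + t < 2 * ((r * δ + 1) / 2) + c := by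
      intro t ht
      have := RG10.startOf_add_lt r δ hδ hm1lt ht
      omega
    have hlt2 : ∀ t : ℕ, t < RG10.bsize δ (i + 1).val →
        RG10.startOf δ (i + 1).val + t < 2 * ((r * δ + 1) / 2) + c := by
      intro t ht
      have := RG10.startOf_add_lt r δ hδ hm2lt ht
      omega
    let ψ : Fin δ → Fin (2 * ((r * δ + 1) / 2) + c) := fun m =>
      if h : (m : ℕ) < RG10.bsize δ (i - 1).val then
        ⟨RG10.startOf δ (i - 1).val + m.val, hlt1 m.val h⟩
      else
        ⟨RG10.startOf δ (i + 1).val + (m.val - RG10.bsize δ (i - 1).val),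
          hlt2 _ (by omega)⟩
    have hmem : ∀ m : Fin δ, ψ m ∈ G.neighborSet v := by
      intro m
      rw [SimpleGraph.mem_neighborSet]
      by_cases h : (m : ℕ) < RG10.bsize δ (i - 1).val
      · have hψ : ψ m = ⟨RG10.startOf δ (i - 1).val + m.val, hlt1 m.val h⟩ := dif_pos h
        rw [hψ]
        have hfψ := hfval (i - 1).val m.val hm1lt h (hlt1 m.val h)
        refine (adj_of _ v ?_).symm
        rw [hfψ, hc1, ← hi]
        ring
      · have hψ : ψ m = ⟨RG10.startOf δ (i + 1).val + (m.val - RG10.bsize δ (i - 1).val),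
            hlt2 _ (by omega)⟩ := dif_neg h
        rw [hψ]
        have hfψ := hfval (i + 1).val _ hm2lt (show m.val - RG10.bsize δ (i - 1).val <
          RG10.bsize δ (i + 1).val by omega) (hlt2 _ (by omega))
        refine adj_of v _ ?_
        rw [hfψ, hc2, ← hi]
        ring
    have hinj : Function.Injective ψ := by
      intro m m' he
      have hv := congrArg Fin.val he
      by_cases h : (m : ℕ) < RG10.bsize δ (i - 1).val <;>
        by_cases h' : (m' : ℕ) < RG10.bsize δ (i - 1).val
      · rw [show ψ m = ⟨RG10.startOf δ (i - 1).val + m.val, hlt1 m.val h⟩ from dif_pos h,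
          show ψ m' = ⟨RG10.startOf δ (i - 1).val + m'.val, hlt1 m'.val h'⟩ from dif_pos h'] at hv
        simp only at hv
        exact Fin.ext (by omega)
      · exfalso
        rw [show ψ m = ⟨RG10.startOf δ (i - 1).val + m.val, hlt1 m.val h⟩ from dif_pos h,
          show ψ m' = ⟨RG10.startOf δ (i + 1).val + (m'.val - RG10.bsize δ (i - 1).val),
            hlt2 _ (by omega)⟩ from dif_neg h'] at hv
        simp only at hv
        apply hm12
        have e1 := RG10.g_startOf δ hδ (i - 1).val m.val h
        have e2 := RG10.g_startOf δ hδ (i + 1).val (m'.val - RG10.bsize δ (i - 1).val)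
          (by omega)
        rw [← e1, ← e2, hv]
      · exfalso
        rw [show ψ m = ⟨RG10.startOf δ (i + 1).val + (m.val - RG10.bsize δ (i - 1).val),
            hlt2 _ (by omega)⟩ from dif_neg h,
          show ψ m' = ⟨RG10.startOf δ (i - 1).val + m'.val, hlt1 m'.val h'⟩ from dif_pos h'] at hv
        simp only at hv
        apply hm12
        have e1 := RG10.g_startOf δ hδ (i - 1).val m'.val h'
        have e2 := RG10.g_startOf δ hδ (i + 1).val (m.val - RG10.bsize δ (i - 1).val)
          (by omega)
        rw [← e1, ← e2, hv]
      · rw [show ψ m = ⟨RG10.startOf δ (i + 1).val + (m.val - RG10.bsize δ (i - 1).val),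
            hlt2 _ (by omega)⟩ from dif_neg h,
          show ψ m' = ⟨RG10.startOf δ (i + 1).val + (m'.val - RG10.bsize δ (i - 1).val),
            hlt2 _ (by omega)⟩ from dif_neg h'] at hv
        simp only at hv
        exact Fin.ext (by omega)
    let ψ' : Fin δ → (G.neighborSet v) := fun m => ⟨ψ m, hmem m⟩
    have hinj' : Function.Injective ψ' := by
      intro m m' he
      exact hinj (congrArg Subtype.val he)
    have hcard : δ ≤ Nat.card (G.neighborSet v) := by
      have h1 : Nat.card (Fin δ) = δ := by simp
      calc δ = Nat.card (Fin δ) := h1.symm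
        _ ≤ Nat.card (G.neighborSet v) := Nat.card_le_card_of_injective ψ' hinj'
    rwa [Nat.card_coe_set_eq] at hcard
  -- radius
  have hrad : graphRadius G = r := by
    rw [graphRadius]
    simp only [hecc]
    exact ciInf_const
  exact ⟨G, conn, hcf, hdeg, hrad⟩
end

section
/- Let g ≥ 3 and δ ≥ 2, and suppose there exists a graph H with f vertices, girth at least g, and minimum degree δ, that is connected and contains an edge lying on a cycle. Then for every integer r > g/2 there exists a connected simple graph on n = ⌈2r/g⌉·f vertices with girth at least g, minimum degree δ, and radius at least r. -/
namespace Stmt13Aux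



open SimpleGraph

/-! ### Circular distance on `ZMod N` -/

/-- circular distance -/
def cdist {N : ℕ} (a b : ZMod N) : ℕ := min (a - b).val (b - a).val

lemma cdist_comm {N : ℕ} (a b : ZMod N) : cdist a b = cdist b a := by
  unfold cdist; omega

lemma cdist_self {N : ℕ} (a : ZMod N) : cdist a a = 0 := by
  simp [cdist]

lemma val_add_le' {N : ℕ} [NeZero N] (x z : ZMod N) : (x + z).val ≤ x.val + z.val := by
  rw [ZMod.val_add]; exact Nat.mod_le _ _

lemma val_sub_of_le {N : ℕ} [NeZero N] {x z : ZMod N} (h : z.val ≤ x.val) :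
    (x - z).val = x.val - z.val := by
  have hx : x = ((x.val : ℕ) : ZMod N) := (ZMod.natCast_rightInverse x).symm
  have hz : z = ((z.val : ℕ) : ZMod N) := (ZMod.natCast_rightInverse z).symm
  have : x - z = (((x.val - z.val : ℕ)) : ZMod N) := by
    rw [Nat.cast_sub h, ← hx, ← hz]
  rw [this, ZMod.val_natCast_of_lt]
  exact lt_of_le_of_lt (Nat.sub_le _ _) (ZMod.val_lt x)

lemma min_val_le {N : ℕ} [NeZero N] (x z : ZMod N) :
    min (x - z).val (z - x).val ≤ x.val + z.val := by
  rcases le_total z.val x.val with h | h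
  · calc min (x - z).val (z - x).val ≤ (x - z).val := min_le_left _ _
      _ = x.val - z.val := val_sub_of_le h
      _ ≤ x.val + z.val := by omega
  · calc min (x - z).val (z - x).val ≤ (z - x).val := min_le_right _ _
      _ = z.val - x.val := val_sub_of_le h
      _ ≤ x.val + z.val := by omega

lemma cdist_triangle {N : ℕ} [NeZero N] (a b c : ZMod N) :
    cdist a c ≤ cdist a b + cdist b c := by
  unfold cdist
  rcases le_total (a - b).val (b - a).val with h1 | h1 <;>
    rcases le_total (b - c).val (c - b).val with h2 | h2
  · -- bound by (a-b)+(b-c)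
    have : (a - c).val ≤ (a - b).val + (b - c).val := by
      have : a - c = (a - b) + (b - c) := by ring
      rw [this]; exact val_add_le' _ _
    omega
  · -- bound via min_val_le with x := a-b, z := c-b
    have h3 := min_val_le (a - b) (c - b)
    have e1 : (a - b) - (c - b) = a - c := by ring
    have e2 : (c - b) - (a - b) = c - a := by ring
    rw [e1, e2] at h3
    omega
  · have h3 := min_val_le (b - c) (b - a)
    have e1 : (b - c) - (b - a) = a - c := by ring
    have e2 : (b - a) - (b - c) = c - a := by ring
    rw [e1, e2] at h3
    omega
  · have : (c - a).val ≤ (c - b).val + (b - a).val := by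
      have : c - a = (c - b) + (b - a) := by ring
      rw [this]; exact val_add_le' _ _
    omega

lemma cdist_add_one {N : ℕ} [NeZero N] (hN : 1 < N) (s : ZMod N) : cdist s (s + 1) ≤ 1 := by
  have : (s + 1 - s : ZMod N) = 1 := by ring
  calc cdist s (s + 1) ≤ (s + 1 - s).val := min_le_right _ _
    _ = 1 := by rw [this, ZMod.val_one_eq_one_mod, Nat.mod_eq_of_lt hN]

/-! ### Potentials along walks -/

lemma nat_potential {V : Type*} {G : SimpleGraph V} (Φ : V → ℕ) (S : Set (Sym2 V))
    (hedge : ∀ ⦃a b⦄, G.Adj a b → s(a,b) ∉ S → Φ b ≤ Φ a + 1 ∧ Φ a ≤ Φ b + 1) :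
    ∀ {x y : V} (p : G.Walk x y), (∀ e ∈ p.edges, e ∉ S) →
      Φ y ≤ Φ x + p.length ∧ Φ x ≤ Φ y + p.length := by
  intro x y p
  induction p with
  | nil => simp
  | cons h q ih =>
    intro hS
    have h1 := hedge h (hS _ (by simp))
    have h2 := ih (fun e he => hS e (by simp [he]))
    simp only [SimpleGraph.Walk.length_cons]
    omega

lemma cdist_potential {V : Type*} {G : SimpleGraph V} {N : ℕ} [NeZero N] (φ : V → ZMod N)
    (hedge : ∀ ⦃a b⦄, G.Adj a b → cdist (φ a) (φ b) ≤ 1) :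
    ∀ {x y : V} (p : G.Walk x y), cdist (φ x) (φ y) ≤ p.length := by
  intro x y p
  induction p with
  | nil => simp [cdist_self]
  | cons h q ih =>
    calc cdist (φ _) (φ _) ≤ cdist (φ _) (φ _) + cdist (φ _) (φ _) := cdist_triangle _ _ _
      _ ≤ 1 + q.length := Nat.add_le_add (hedge h) ih
      _ = (SimpleGraph.Walk.cons h q).length := by simp [SimpleGraph.Walk.length_cons]; omega





open SimpleGraph SimpleGraph.Walk

lemma length_drop' {V : Type*} {G : SimpleGraph V} :
    ∀ {u v : V} (p : G.Walk u v) (n : ℕ), (p.drop n).length = p.length - n := by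
  intro u v p
  induction p with
  | nil => intro n; cases n <;> simp [Walk.drop]
  | cons h q ih =>
    intro n
    cases n with
    | zero => simp [Walk.drop]
    | succ m => simp [Walk.drop, ih m]

lemma closed_nodup_nil {V : Type*} {G : SimpleGraph V} {a : V} (q : G.Walk a a)
    (h : q.support.Nodup) : q.length = 0 := by
  cases q with
  | nil => rfl
  | cons h' q2 =>
    exfalso
    have : a ∈ q2.support := q2.end_mem_support
    simp only [Walk.support_cons, List.nodup_cons] at h
    exact h.1 this

lemma path_last_edge {V : Type*} {G : SimpleGraph V} {b : V} :
    ∀ {z a : V} (q : G.Walk z a), q.IsPath → s(a, b) ∈ q.edges →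
      ∃ p : G.Walk z b, s(a, b) ∉ p.edges ∧ p.length + 1 = q.length := by
  intro z a q
  induction q with
  | nil => simp
  | @cons z w1 a hadj q1 ih =>
    intro hq hmem
    have hq1 : q1.IsPath := hq.of_cons
    have hnodup : (z :: q1.support).Nodup := by
      simpa using hq.support_nodup
    rw [Walk.edges_cons, List.mem_cons] at hmem
    rcases hmem with heq | hmem
    · -- s(a,b) = s(z,w1)
      rw [Sym2.eq_iff] at heq
      rcases heq with ⟨ha, hb⟩ | ⟨ha, hb⟩
      · -- a = z : contradiction
        exfalso
        apply (List.nodup_cons.mp hnodup).1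
        rw [← ha]
        exact q1.end_mem_support
      · -- a = w1, b = z : q1 is a closed walk, hence nil
        subst hb
        have hlen : q1.length = 0 := by
          have : q1.support.Nodup := (List.nodup_cons.mp hnodup).2
          subst ha
          exact closed_nodup_nil q1 this
        refine ⟨Walk.nil, by simp, by simp [hlen]⟩
    · -- edge in q1
      obtain ⟨p1, hp1, hlen1⟩ := ih hq1 hmem
      refine ⟨Walk.cons hadj p1, ?_, by simp [← hlen1]⟩
      rw [Walk.edges_cons, List.mem_cons]
      rintro (heq | hm)
      · rw [Sym2.eq_iff] at heq
        rcases heq with ⟨ha, hb⟩ | ⟨ha, hb⟩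
        · apply (List.nodup_cons.mp hnodup).1
          rw [← ha]; exact q1.end_mem_support
        · -- a = w1: then q1 : Walk w1 a is closed with an edge
          have : q1.support.Nodup := (List.nodup_cons.mp hnodup).2
          subst ha
          have h0 := closed_nodup_nil q1 this
          have : q1.edges.length = q1.length := q1.length_edges
          rw [h0] at this
          rw [List.length_eq_zero_iff.mp this] at hmem
          simp at hmem
      · exact hp1 hm

lemma cycle_erase_aux {V : Type*} {G : SimpleGraph V} {x y : V} (c2 : G.Walk x x)
    (hc : c2.IsCycle) (hmem : s(x, y) ∈ c2.edges) :
    ∃ p : G.Walk x y, s(x, y) ∉ p.edges ∧ p.length + 1 = c2.length := by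
  cases c2 with
  | nil => simp at hmem
  | @cons _ w1 _ hadj q =>
    rw [Walk.cons_isCycle_iff] at hc
    obtain ⟨hqpath, hqne⟩ := hc
    rw [Walk.edges_cons, List.mem_cons] at hmem
    rcases hmem with heq | hmem
    · rw [Sym2.eq_iff] at heq
      rcases heq with ⟨-, hb⟩ | ⟨ha, hb⟩
      · subst hb
        refine ⟨q.reverse, ?_, by simp⟩
        rw [Walk.edges_reverse, List.mem_reverse]
        exact hqne
      · exact absurd ha hadj.ne
    · obtain ⟨p1, hp1, hlen1⟩ := path_last_edge q hqpath hmem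
      refine ⟨Walk.cons hadj p1, ?_, by simp [← hlen1]⟩
      rw [Walk.edges_cons, List.mem_cons]
      rintro (heq | hm)
      · rw [← heq] at hqne; exact hqne hmem
      · exact hp1 hm

lemma cycle_erase {V : Type*} [DecidableEq V] {G : SimpleGraph V} {x y : V} {a : V} (c : G.Walk a a)
    (hc : c.IsCycle) (hxy : s(x, y) ∈ c.edges) :
    ∃ p : G.Walk x y, s(x, y) ∉ p.edges ∧ p.length + 1 = c.length := by
  have hx : x ∈ c.support := c.fst_mem_support_of_mem_edges hxy
  have hlenrot : (c.rotate x hx).length = c.length := by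
    have := (c.rotate_edges x hx).perm.length_eq
    rw [Walk.length_edges, Walk.length_edges] at this
    exact this
  have hmemrot : s(x, y) ∈ (c.rotate x hx).edges := (c.rotate_edges x hx).mem_iff.mpr hxy
  have hcycrot : (c.rotate x hx).IsCycle := hc.rotate hx
  obtain ⟨p, h1, h2⟩ := cycle_erase_aux (c.rotate x hx) hcycrot hmemrot
  exact ⟨p, h1, by rw [h2, hlenrot]⟩





open SimpleGraph SimpleGraph.Walk

variable {W : Type*}

/-- The cycle-of-copies graph: `k` copies of `H'`, with `(u,j)` joined to `(y,j+1)`. -/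
def cyc (H' : SimpleGraph W) (u y : W) (k : ℕ) : SimpleGraph (W × ZMod k) :=
  SimpleGraph.fromRel (fun p q =>
    (p.2 = q.2 ∧ H'.Adj p.1 q.1) ∨ (q.2 = p.2 + 1 ∧ p.1 = u ∧ q.1 = y))

variable {H' : SimpleGraph W} {u y : W} {k : ℕ}

lemma cyc_adj (hone : (1 : ZMod k) ≠ 0) {p q : W × ZMod k} :
    (cyc H' u y k).Adj p q ↔
      (p.2 = q.2 ∧ H'.Adj p.1 q.1) ∨ (q.2 = p.2 + 1 ∧ p.1 = u ∧ q.1 = y) ∨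
        (p.2 = q.2 + 1 ∧ p.1 = y ∧ q.1 = u) := by
  rw [cyc, fromRel_adj]
  constructor
  · rintro ⟨hne, (⟨h1, h2⟩ | ⟨h1, h2, h3⟩) | (⟨h1, h2⟩ | ⟨h1, h2, h3⟩)⟩
    · exact Or.inl ⟨h1, h2⟩
    · exact Or.inr (Or.inl ⟨h1, h2, h3⟩)
    · exact Or.inl ⟨h1.symm, h2.symm⟩
    · exact Or.inr (Or.inr ⟨h1, h3, h2⟩)
  · rintro (⟨h1, h2⟩ | ⟨h1, h2, h3⟩ | ⟨h1, h2, h3⟩)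
    · exact ⟨fun he => h2.ne (congrArg Prod.fst he), Or.inl (Or.inl ⟨h1, h2⟩)⟩
    · refine ⟨fun he => ?_, Or.inl (Or.inr ⟨h1, h2, h3⟩)⟩
      rw [he] at h1
      exact hone (left_eq_add.mp h1)
    · refine ⟨fun he => ?_, Or.inr (Or.inr ⟨h1, h3, h2⟩)⟩
      rw [he] at h1
      exact hone (left_eq_add.mp h1)

lemma cyc_layer_adj (hone : (1 : ZMod k) ≠ 0) {a b : W} (h : H'.Adj a b) (j : ZMod k) :
    (cyc H' u y k).Adj (a, j) (b, j) :=
  (cyc_adj hone).mpr (Or.inl ⟨rfl, h⟩)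

lemma cyc_cross_adj (hone : (1 : ZMod k) ≠ 0) (j : ZMod k) :
    (cyc H' u y k).Adj (u, j) (y, j + 1) :=
  (cyc_adj hone).mpr (Or.inr (Or.inl ⟨rfl, rfl, rfl⟩))

lemma cyc_connected [NeZero k] (hone : (1 : ZMod k) ≠ 0) (h1 : H'.Connected) :
    (cyc H' u y k).Connected := by
  have hlayer : ∀ (j : ZMod k) (a b : W), (cyc H' u y k).Reachable (a, j) (b, j) := by
    intro j a b
    exact Reachable.map
      (⟨fun a => (a, j), fun {a b} h => cyc_layer_adj hone h j⟩ : H' →g cyc H' u y k)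
      (h1.preconnected a b)
  have hstep : ∀ j : ZMod k, (cyc H' u y k).Reachable (y, j) (y, j + 1) :=
    fun j => (hlayer j y u).trans (cyc_cross_adj hone j).reachable
  have hy : ∀ n : ℕ, (cyc H' u y k).Reachable (y, 0) (y, (n : ZMod k)) := by
    intro n
    induction n with
    | zero => simpa using SimpleGraph.Reachable.refl _
    | succ m ih => push_cast; exact ih.trans (hstep _)
  have hall : ∀ p : W × ZMod k, (cyc H' u y k).Reachable (y, 0) p := by
    rintro ⟨a, j⟩
    have : ((j.val : ℕ) : ZMod k) = j := ZMod.natCast_rightInverse j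
    exact ((hy j.val).trans (by rw [this])).trans (hlayer j y a)
  haveI : Nonempty (W × ZMod k) := ⟨(y, 0)⟩
  exact ⟨fun p q => (hall p).symm.trans (hall q)⟩

lemma cyc_deg_base [NeZero k] [Fintype W] {a : W} (hone : (1 : ZMod k) ≠ 0) (j : ZMod k) :
    (H'.neighborSet a).ncard ≤ ((cyc H' u y k).neighborSet (a, j)).ncard := by
  have hinj : Function.Injective (fun b : W => (b, j)) :=
    fun b c h => (Prod.mk.injEq _ _ _ _).mp h |>.1
  have himg : (fun b : W => (b, j)) '' (H'.neighborSet a) ⊆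
      (cyc H' u y k).neighborSet (a, j) := by
    rintro _ ⟨b, hb, rfl⟩
    exact cyc_layer_adj hone hb j
  rw [← Set.ncard_image_of_injective (H'.neighborSet a) hinj]
  exact Set.ncard_le_ncard himg (Set.toFinite _)

lemma cyc_deg_aux [NeZero k] [Fintype W] {δ : ℕ} {a : W} (hone : (1 : ZMod k) ≠ 0) (j : ZMod k)
    (extra : W × ZMod k) (hmem : extra ∈ (cyc H' u y k).neighborSet (a, j))
    (hsnd : extra.2 ≠ j) (hδ : δ ≤ (H'.neighborSet a).ncard + 1) :
    δ ≤ ((cyc H' u y k).neighborSet (a, j)).ncard := by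
  have hinj : Function.Injective (fun b : W => (b, j)) :=
    fun b c h => (Prod.mk.injEq _ _ _ _).mp h |>.1
  have himg : (fun b : W => (b, j)) '' (H'.neighborSet a) ⊆
      (cyc H' u y k).neighborSet (a, j) := by
    rintro _ ⟨b, hb, rfl⟩
    exact cyc_layer_adj hone hb j
  have hnot : extra ∉ (fun b : W => (b, j)) '' (H'.neighborSet a) := by
    rintro ⟨b, -, hb⟩
    exact hsnd (congrArg Prod.snd hb).symm
  have hsub : insert extra ((fun b : W => (b, j)) '' (H'.neighborSet a)) ⊆
      (cyc H' u y k).neighborSet (a, j) := Set.insert_subset hmem himg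
  calc δ ≤ (H'.neighborSet a).ncard + 1 := hδ
    _ = (insert extra ((fun b : W => (b, j)) '' (H'.neighborSet a))).ncard := by
        rw [Set.ncard_insert_of_notMem hnot (Set.toFinite _),
          Set.ncard_image_of_injective _ hinj]
    _ ≤ _ := Set.ncard_le_ncard hsub (Set.toFinite _)

lemma cyc_deg [NeZero k] [Fintype W] {δ : ℕ} (hone : (1 : ZMod k) ≠ 0)
    (hd : ∀ a : W, a ≠ u → a ≠ y → δ ≤ (H'.neighborSet a).ncard)
    (hdu : δ ≤ (H'.neighborSet u).ncard + 1)
    (hdy : δ ≤ (H'.neighborSet y).ncard + 1) :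
    ∀ p : W × ZMod k, δ ≤ ((cyc H' u y k).neighborSet p).ncard := by
  rintro ⟨a, j⟩
  by_cases hau : a = u
  · subst hau
    refine cyc_deg_aux hone j (y, j + 1) (cyc_cross_adj hone j) ?_ hdu
    intro hj
    exact hone (left_eq_add.mp hj.symm)
  by_cases hay : a = y
  · subst hay
    refine cyc_deg_aux hone j (u, j - 1) ?_ ?_ hdy
    · have := cyc_cross_adj (H' := H') (u := u) (y := a) hone (j - 1)
      rw [sub_add_cancel] at this
      exact this.symm
    · intro hj
      exact hone (by rwa [sub_eq_self] at hj)
  · exact le_trans (hd a hau hay) (cyc_deg_base hone j)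




open SimpleGraph SimpleGraph.Walk



lemma val_pred {t : ZMod k} [NeZero k] (ht : t ≠ 0) : (t - 1).val + 1 = t.val := by
  have h1 : (1 : ℕ) ≤ t.val := by
    rcases Nat.eq_zero_or_pos t.val with h | h
    · exact absurd ((ZMod.val_eq_zero t).mp h) ht
    · omega
  have ht' : t = ((t.val : ℕ) : ZMod k) := (ZMod.natCast_rightInverse t).symm
  have : t - 1 = (((t.val - 1 : ℕ)) : ZMod k) := by
    rw [Nat.cast_sub h1, ← ht', Nat.cast_one]
  rw [this, ZMod.val_natCast_of_lt (lt_of_le_of_lt (Nat.sub_le _ _) (ZMod.val_lt t))]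
  omega

lemma cyc_girth [NeZero k] (hk1 : 1 < k) {g : ℕ} (ψ : W → ℕ)
    (hlip : ∀ ⦃a b⦄, H'.Adj a b → ψ b ≤ ψ a + 1) (hψy : ψ y = 0) (hψu : ψ u + 1 = g)
    (hcycH : ∀ (a : W) (c : H'.Walk a a), c.IsCycle → g ≤ c.length) :
    ∀ (x : W × ZMod k) (c : (cyc H' u y k).Walk x x), c.IsCycle → g ≤ c.length := by
  classical
  haveI : Fact (1 < k) := ⟨hk1⟩
  have hone : (1 : ZMod k) ≠ 0 := one_ne_zero
  intro x c hc
  by_cases hcross : ∃ m : ZMod k, s(((u, m) : W × ZMod k), ((y, m + 1) : W × ZMod k)) ∈ c.edges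
  · obtain ⟨m, hm⟩ := hcross
    obtain ⟨p, hpe, hplen⟩ := cycle_erase c hc hm
    set S : Set (Sym2 (W × ZMod k)) :=
      {s(((u, m) : W × ZMod k), ((y, m + 1) : W × ZMod k))} with hS
    set Φ : W × ZMod k → ℕ := fun q => (q.2 - (m + 1)).val * g + ψ q.1 with hΦ
    have hedge : ∀ ⦃a b : W × ZMod k⦄, (cyc H' u y k).Adj a b → s(a, b) ∉ S →
        Φ b ≤ Φ a + 1 ∧ Φ a ≤ Φ b + 1 := by
      intro a b hab hSm
      rcases (cyc_adj hone).mp hab with ⟨h1, h2⟩ | ⟨h1, h2, h3⟩ | ⟨h1, h2, h3⟩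
      · have l1 := hlip h2
        have l2 := hlip h2.symm
        simp only [hΦ, h1]
        omega
      · -- cross up : b.2 = a.2 + 1, a.1 = u, b.1 = y
        have hne : a.2 ≠ m := by
          intro hm2
          apply hSm
          rw [hS]
          have ha : a = (u, m) := Prod.ext h2 hm2
          have hb : b = (y, m + 1) := Prod.ext h3 (by rw [h1, hm2])
          rw [ha, hb]
          rfl
        have htne : a.2 - m ≠ 0 := sub_ne_zero.mpr hne
        have hv := val_pred htne
        have e1 : b.2 - (m + 1) = a.2 - m := by rw [h1]; ring
        have e2 : a.2 - (m + 1) = (a.2 - m) - 1 := by ring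
        have hmul : (a.2 - m).val * g = ((a.2 - m) - 1).val * g + g := by
          rw [← hv]; ring
        have : Φ b = Φ a + 1 := by
          simp only [hΦ, e1, e2, h2, h3, hψy]
          omega
        omega
      · -- cross down : a.2 = b.2 + 1, a.1 = y, b.1 = u
        have hne : b.2 ≠ m := by
          intro hm2
          apply hSm
          rw [hS]
          have hb : b = (u, m) := Prod.ext h3 hm2
          have ha : a = (y, m + 1) := Prod.ext h2 (by rw [h1, hm2])
          rw [ha, hb]
          exact Sym2.eq_swap ▸ rfl
        have htne : b.2 - m ≠ 0 := sub_ne_zero.mpr hne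
        have hv := val_pred htne
        have e1 : a.2 - (m + 1) = b.2 - m := by rw [h1]; ring
        have e2 : b.2 - (m + 1) = (b.2 - m) - 1 := by ring
        have hmul : (b.2 - m).val * g = ((b.2 - m) - 1).val * g + g := by
          rw [← hv]; ring
        have : Φ a = Φ b + 1 := by
          simp only [hΦ, e1, e2, h2, h3, hψy]
          omega
        omega
    have hall : ∀ e ∈ p.edges, e ∉ S := by
      intro e he hmem
      rw [hS, Set.mem_singleton_iff] at hmem
      rw [hmem] at he
      exact hpe he
    have hpot := (nat_potential Φ S hedge p hall).2
    have hΦu : Φ (u, m) = (k - 1) * g + ψ u := by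
      have : (m - (m + 1) : ZMod k) = -1 := by ring
      simp only [hΦ, this]
      have : ((-1 : ZMod k)).val = k - 1 := by
        rw [ZMod.neg_val]
        simp [hone, ZMod.val_one]
      rw [this]
    have hΦy : Φ (y, m + 1) = 0 := by
      simp [hΦ, hψy]
    rw [hΦu, hΦy] at hpot
    have hk1' : 1 ≤ k := le_of_lt hk1
    have : g ≤ (k - 1) * g + ψ u + 1 := by
      have : 0 ≤ (k-1) * g := Nat.zero_le _
      omega
    omega
  · -- all edges internal
    push_neg at hcross
    have hint : ∀ a b : W × ZMod k, s(a, b) ∈ c.edges → a.2 = b.2 := by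
      intro a b hab
      have hadj := c.adj_of_mem_edges hab
      rcases (cyc_adj hone).mp hadj with ⟨h1, h2⟩ | ⟨h1, h2, h3⟩ | ⟨h1, h2, h3⟩
      · exact h1
      · exfalso
        apply hcross a.2
        have ha : a = (u, a.2) := Prod.ext h2 rfl
        have hb : b = (y, a.2 + 1) := Prod.ext h3 h1
        rw [← ha, ← hb]
        exact hab
      · exfalso
        apply hcross b.2
        have hb : b = (u, b.2) := Prod.ext h3 rfl
        have ha : a = (y, b.2 + 1) := Prod.ext h2 h1
        rw [Sym2.eq_swap, ← ha, ← hb]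
        exact hab
    -- projection to H'
    have proj : ∀ (x1 x2 : W × ZMod k) (wk : (cyc H' u y k).Walk x1 x2),
        (∀ a b : W × ZMod k, s(a, b) ∈ wk.edges → a.2 = b.2) →
        ∃ w' : H'.Walk x1.1 x2.1, w'.length = wk.length ∧
          w'.edges = wk.edges.map (Sym2.map Prod.fst) ∧
          w'.support = wk.support.map Prod.fst ∧
          ∀ z ∈ wk.support, z.2 = x1.2 := by
      intro x1 x2 wk
      induction wk with
      | nil => exact fun _ => ⟨Walk.nil, by simp, by simp, by simp, by simp⟩
      | @cons p m0 q0 h q ih =>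
        intro hi
        have hpm : p.2 = m0.2 := hi p m0 (by simp)
        have hadj : H'.Adj p.1 m0.1 := by
          rcases (cyc_adj hone).mp h with ⟨h1, h2⟩ | ⟨h1, h2, h3⟩ | ⟨h1, h2, h3⟩
          · exact h2
          · exfalso; rw [hpm] at h1; exact hone (left_eq_add.mp h1)
          · exfalso; rw [hpm] at h1; exact hone (left_eq_add.mp h1)
        obtain ⟨w'', hl, he, hs, hz⟩ := ih (fun a b hab => hi a b (by simp [hab]))
        refine ⟨Walk.cons hadj w'', by simp [hl], by simp [he], by simp [hs], ?_⟩
        intro z hz2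
        rw [Walk.support_cons, List.mem_cons] at hz2
        rcases hz2 with rfl | hz2
        · rfl
        · rw [hz z hz2, hpm]
    obtain ⟨w', hlen, hedges, hsupp, hsnd⟩ := proj x x c hint
    have hinj2 : ∀ e1 ∈ c.edges, ∀ e2 ∈ c.edges,
        Sym2.map Prod.fst e1 = Sym2.map Prod.fst e2 → e1 = e2 := by
      intro e1 h1 e2 h2 hmap
      induction e1 with
      | _ a1 b1 =>
        induction e2 with
        | _ a2 b2 =>
          have ha1 : a1.2 = x.2 := hsnd a1 (c.fst_mem_support_of_mem_edges h1)
          have hb1 : b1.2 = x.2 := hsnd b1 (c.snd_mem_support_of_mem_edges h1)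
          have ha2 : a2.2 = x.2 := hsnd a2 (c.fst_mem_support_of_mem_edges h2)
          have hb2 : b2.2 = x.2 := hsnd b2 (c.snd_mem_support_of_mem_edges h2)
          rw [Sym2.map_pair_eq, Sym2.map_pair_eq, Sym2.eq_iff] at hmap
          rcases hmap with ⟨hf1, hf2⟩ | ⟨hf1, hf2⟩
          · rw [Prod.ext hf1 (ha1.trans ha2.symm), Prod.ext hf2 (hb1.trans hb2.symm)]
          · rw [Prod.ext hf1 (ha1.trans hb2.symm), Prod.ext hf2 (hb1.trans ha2.symm),
              Sym2.eq_swap]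
    have hw'cyc : w'.IsCycle := by
      rw [Walk.isCycle_def]
      refine ⟨?_, ?_, ?_⟩
      · rw [Walk.isTrail_def, hedges]
        exact (hc.isCircuit.isTrail.edges_nodup).map_on hinj2
      · intro hnil
        have h3 := hc.three_le_length
        rw [hnil] at hlen
        simp at hlen
        omega
      · have : w'.support.tail = c.support.tail.map Prod.fst := by
          rw [hsupp, ← List.map_tail]
        rw [this]
        refine List.Nodup.map_on ?_ hc.support_nodup
        intro z1 hz1 z2 hz2 hfst
        exact Prod.ext hfst
          (((hsnd z1 (List.mem_of_mem_tail hz1))).trans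
            (hsnd z2 (List.mem_of_mem_tail hz2)).symm)
    calc g ≤ w'.length := hcycH x.1 w' hw'cyc
      _ = c.length := hlen

lemma cyc_radius [NeZero k] (hk1 : 1 < k) {g r : ℕ} (hg : 1 ≤ g) (hr1 : 1 ≤ r)
    (hrkg : 2 * r ≤ k * g) (ψ : W → ℕ)
    (hlip : ∀ ⦃a b⦄, H'.Adj a b → ψ b ≤ ψ a + 1) (hψy : ψ y = 0) (hψu : ψ u + 1 = g)
    (hsurj : ∀ s, s < g → ∃ a, ψ a = s) :
    ∀ x₀ : W × ZMod k, ∃ y₀ : W × ZMod k,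
      ∀ (p : (cyc H' u y k).Walk x₀ y₀), r ≤ p.length := by
  haveI : Fact (1 < k) := ⟨hk1⟩
  have hone : (1 : ZMod k) ≠ 0 := one_ne_zero
  have hkg0 : k * g ≠ 0 := Nat.mul_ne_zero (by omega) (by omega)
  haveI : NeZero (k * g) := ⟨hkg0⟩
  have hkg1 : 1 < k * g := by
    calc 1 < k := hk1
      _ = k * 1 := (mul_one k).symm
      _ ≤ k * g := Nat.mul_le_mul_left k hg
  set φ : W × ZMod k → ZMod (k * g) := fun q => ((q.2.val * g + ψ q.1 : ℕ) : ZMod (k * g))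
    with hφ
  have hcross_eq : ∀ (j : ZMod k), ((((j + 1).val * g : ℕ)) : ZMod (k * g))
      = (((j.val * g + g : ℕ)) : ZMod (k * g)) := by
    intro j
    have hval : (j + 1).val = (j.val + 1) % k := by
      rw [ZMod.val_add, ZMod.val_one]
    by_cases hlt : j.val + 1 < k
    · rw [hval, Nat.mod_eq_of_lt hlt]
      congr 1
      ring
    · have hj : j.val + 1 = k := by
        have := ZMod.val_lt j
        omega
      rw [hval, hj, Nat.mod_self]
      have : ((j.val * g + g : ℕ) : ZMod (k * g)) = (((j.val + 1) * g : ℕ) : ZMod (k * g)) := by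
        congr 1
        ring
      rw [this, hj, ZMod.natCast_self]
      simp
  have hedge : ∀ ⦃a b : W × ZMod k⦄, (cyc H' u y k).Adj a b → cdist (φ a) (φ b) ≤ 1 := by
    intro a b hab
    rcases (cyc_adj hone).mp hab with ⟨h1, h2⟩ | ⟨h1, h2, h3⟩ | ⟨h1, h2, h3⟩
    · have l1 := hlip h2
      have l2 := hlip h2.symm
      rcases Nat.lt_trichotomy (ψ a.1) (ψ b.1) with hlt | heq | hgt
      · have hb : ψ b.1 = ψ a.1 + 1 := by omega
        have : φ b = φ a + 1 := by
          rw [hφ]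
          simp only [← h1, hb]
          push_cast
          ring
        rw [this]
        exact cdist_add_one hkg1 _
      · have : φ a = φ b := by rw [hφ]; simp only [h1, heq]
        rw [this, cdist_self]
        omega
      · have hb : ψ a.1 = ψ b.1 + 1 := by omega
        have : φ a = φ b + 1 := by
          rw [hφ]
          simp only [h1, hb]
          push_cast
          ring
        rw [cdist_comm, this]
        exact cdist_add_one hkg1 _
    · -- cross up
      have : φ b = φ a + 1 := by
        rw [hφ]
        simp only [h1, h2, h3, hψy, Nat.add_zero]
        rw [hcross_eq a.2]
        have : (a.2.val * g + g : ℕ) = (a.2.val * g + ψ u + 1 : ℕ) := by omega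
        rw [this]
        push_cast
        ring
      rw [this]
      exact cdist_add_one hkg1 _
    · -- cross down
      have : φ a = φ b + 1 := by
        rw [hφ]
        simp only [h1, h2, h3, hψy, Nat.add_zero]
        rw [hcross_eq b.2]
        have : (b.2.val * g + g : ℕ) = (b.2.val * g + ψ u + 1 : ℕ) := by omega
        rw [this]
        push_cast
        ring
      rw [cdist_comm, this]
      exact cdist_add_one hkg1 _
  intro x₀
  set t : ZMod (k * g) := φ x₀ + ((r : ℕ) : ZMod (k * g)) with ht
  have hs0 : t.val % g < g := Nat.mod_lt _ (by omega)
  have hq0 : t.val / g < k := by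
    rw [Nat.div_lt_iff_lt_mul (by omega : 0 < g)]
    exact ZMod.val_lt t
  obtain ⟨a0, ha0⟩ := hsurj (t.val % g) hs0
  refine ⟨(a0, ((t.val / g : ℕ) : ZMod k)), ?_⟩
  have hφy : φ (a0, ((t.val / g : ℕ) : ZMod k)) = t := by
    rw [hφ]
    simp only [ha0]
    rw [ZMod.val_natCast_of_lt hq0]
    have : t.val / g * g + t.val % g = t.val := by
      rw [mul_comm]; exact Nat.div_add_mod _ _
    rw [this]
    exact ZMod.natCast_rightInverse t
  intro p
  have hpot := cdist_potential φ hedge p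
  rw [hφy] at hpot
  have hrlt : r < k * g := by omega
  have hrval : ((r : ℕ) : ZMod (k * g)).val = r := ZMod.val_natCast_of_lt hrlt
  have hrne : ((r : ℕ) : ZMod (k * g)) ≠ 0 := by
    intro h
    rw [h] at hrval
    simp [ZMod.val_zero] at hrval
    omega
  have hcd : cdist (φ x₀) t = r := by
    unfold cdist
    have e1 : φ x₀ - t = -((r : ℕ) : ZMod (k * g)) := by rw [ht]; ring
    have e2 : t - φ x₀ = ((r : ℕ) : ZMod (k * g)) := by rw [ht]; ring
    rw [e1, e2, hrval, ZMod.neg_val]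
    simp only [hrne, if_false]
    rw [hrval]
    omega
  omega



end Stmt13Aux

open Stmt13Aux in
/-- Suppose there is a connected graph `H` on `f` vertices of girth at
least `g ≥ 3`, minimum degree `δ ≥ 2`, containing an edge lying on a cycle (i.e. a
non-bridge edge). Then for every `r > g/2` there is a connected graph on
`n = ⌈2r/g⌉·f` vertices of girth at least `g`, minimum degree `δ` and radius at least
`r` (note `⌈a/g⌉ = (a + g - 1)/g` in `ℕ`, and `r > g/2 ↔ 2r > g`). -/
theorem radius_girth_stmt13 (g δ f : ℕ) (hg : 3 ≤ g) (hδ : 2 ≤ δ)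
    {W : Type*} [Fintype W] (H : SimpleGraph W)
    (hcard : Fintype.card W = f)
    (hgirth : (g : ℕ∞) ≤ H.egirth)
    (hdeg : ∀ v : W, δ ≤ (H.neighborSet v).ncard)
    (hconn : H.Connected)
    (hedge : ∃ e ∈ H.edgeSet, ¬ H.IsBridge e)
    (r : ℕ) (hr : g < 2 * r) :
    ∃ G : SimpleGraph (Fin ((2 * r + g - 1) / g * f)), G.Connected ∧
      (g : ℕ∞) ≤ G.egirth ∧ (∀ v, δ ≤ (G.neighborSet v).ncard) ∧
      r ≤ graphRadius G := by
  classical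
  obtain ⟨e, heE, hbr⟩ := hedge
  induction e using Sym2.ind with
  | _ u y =>
  rw [SimpleGraph.mem_edgeSet] at heE
  set k := (2 * r + g - 1) / g with hk
  have hg0 : 0 < g := by omega
  have hdm : g * k + (2 * r + g - 1) % g = 2 * r + g - 1 := Nat.div_add_mod _ _
  have hdm' : k * g + (2 * r + g - 1) % g = 2 * r + g - 1 := by rw [mul_comm] at hdm; exact hdm
  have hmlt : (2 * r + g - 1) % g < g := Nat.mod_lt _ hg0
  have hk2 : 2 ≤ k := by
    by_contra hcon
    have hkg : k * g ≤ g := by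
      calc k * g ≤ 1 * g := Nat.mul_le_mul_right g (by omega)
        _ = g := one_mul g
    omega
  have hkg2r : 2 * r ≤ k * g := by omega
  -- the graph H' with the edge s(u,y) deleted
  set H' := H.deleteEdges {s(u, y)} with hH'
  have hle : H' ≤ H := SimpleGraph.deleteEdges_le _
  have hreach : H'.Reachable u y := by
    rw [SimpleGraph.isBridge_iff] at hbr
    push_neg at hbr
    exact hbr
  have hadjR : ∀ a b : W, H.Adj a b → H'.Reachable a b := by
    intro a b hab
    by_cases he : s(a, b) = s(u, y)
    · rw [Sym2.eq_iff] at he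
      rcases he with ⟨rfl, rfl⟩ | ⟨rfl, rfl⟩
      · exact hreach
      · exact hreach.symm
    · exact (SimpleGraph.deleteEdges_adj.mpr ⟨hab, by simp [he]⟩).reachable
  have hH'conn : H'.Connected := by
    have key : ∀ {a b : W} (w : H.Walk a b), H'.Reachable a b := by
      intro a b w
      induction w with
      | nil => exact SimpleGraph.Reachable.refl _
      | cons h q ih => exact (hadjR _ _ h).trans ih
    haveI := hconn.nonempty
    exact ⟨fun a b => (hconn.preconnected a b).elim fun w => key w⟩
  -- girth facts
  have hHcyc : ∀ (a : W) (c : H.Walk a a), c.IsCycle → g ≤ c.length := by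
    intro a c hcyc
    have := SimpleGraph.le_egirth.mp hgirth a c hcyc
    exact_mod_cast this
  have hH'cyc : ∀ (a : W) (c : H'.Walk a a), c.IsCycle → g ≤ c.length := by
    intro a c hcyc
    have h2 := hHcyc a (c.mapLe hle) (hcyc.mapLe hle)
    rwa [SimpleGraph.Walk.length_map] at h2
  have hedgesH' : ∀ {a b : W} (p : H'.Walk a b), s(u, y) ∉ p.edges := by
    intro a b p hmem
    have := p.edges_subset_edgeSet hmem
    rw [hH', SimpleGraph.edgeSet_deleteEdges] at this
    exact this.2 rfl
  -- the distance from y to u in H' is at least g - 1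
  have hdyu : g ≤ H'.dist y u + 1 := by
    obtain ⟨p, hp, hplen⟩ := SimpleGraph.Reachable.exists_path_of_dist hreach.symm
    have hpH : (p.mapLe hle).IsPath := hp.mapLe hle
    have hne : s(u, y) ∉ (p.mapLe hle).edges := by
      intro hmem
      rw [SimpleGraph.Walk.edges_map] at hmem
      simp only [List.mem_map, SimpleGraph.Hom.coe_ofLE, Sym2.map_id, Sym2.map_id',
        id_eq, id] at hmem
      obtain ⟨e', he', hmape⟩ := hmem
      rw [hmape] at he'
      exact hedgesH' p he'
    have hcyc := (SimpleGraph.Walk.cons_isCycle_iff _ heE).mpr ⟨hpH, hne⟩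
    have h2 := hHcyc u _ hcyc
    rw [SimpleGraph.Walk.length_cons, SimpleGraph.Walk.length_map, hplen] at h2
    omega
  -- the potential function ψ
  set ψ : W → ℕ := fun a => min (H'.dist y a) (g - 1) with hψ
  have hψy : ψ y = 0 := by simp [hψ]
  have hψu : ψ u + 1 = g := by
    have : g - 1 ≤ H'.dist y u := by omega
    simp only [hψ]
    omega
  have hψlip : ∀ ⦃a b : W⦄, H'.Adj a b → ψ b ≤ ψ a + 1 := by
    intro a b hab
    have htri : H'.dist y b ≤ H'.dist y a + H'.dist a b := hH'conn.dist_triangle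
    have h1 : H'.dist a b ≤ 1 := by
      have := SimpleGraph.dist_le (SimpleGraph.Walk.cons hab SimpleGraph.Walk.nil)
      simpa using this
    simp only [hψ]
    omega
  have hψsurj : ∀ s, s < g → ∃ a, ψ a = s := by
    intro s hs
    obtain ⟨p, hp, hplen⟩ := SimpleGraph.Reachable.exists_path_of_dist hreach.symm
    have hsle : s ≤ p.length := by omega
    refine ⟨p.getVert s, ?_⟩
    have hz1 : H'.dist y (p.getVert s) ≤ s := by
      have hd := SimpleGraph.dist_le ((p.reverse.drop (p.length - s)).reverse)
      rw [SimpleGraph.Walk.length_reverse, length_drop', SimpleGraph.Walk.length_reverse]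
        at hd
      have hgv : p.reverse.getVert (p.length - s) = p.getVert s := by
        rw [SimpleGraph.Walk.getVert_reverse, Nat.sub_sub_self hsle]
      rw [hgv] at hd
      calc H'.dist y (p.getVert s) ≤ p.length - (p.length - s) := hd
        _ ≤ s := by omega
    have hz2 : H'.dist (p.getVert s) u ≤ p.length - s := by
      have hd := SimpleGraph.dist_le (p.drop s)
      rwa [length_drop'] at hd
    have htri : H'.dist y u ≤ H'.dist y (p.getVert s) + H'.dist (p.getVert s) u :=
      hH'conn.dist_triangle
    have : H'.dist y (p.getVert s) = s := by omega
    simp only [hψ, this]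
    omega
  -- instances and hypotheses for the cyc lemmas
  haveI : NeZero k := ⟨by omega⟩
  haveI : Fact (1 < k) := ⟨by omega⟩
  have hone : (1 : ZMod k) ≠ 0 := one_ne_zero
  have huy : u ≠ y := heE.ne
  have hGconn : (cyc H' u y k).Connected := cyc_connected hone hH'conn
  have hGgirth := cyc_girth (H' := H') (u := u) (y := y) (by omega : 1 < k)
    ψ hψlip hψy hψu hH'cyc
  have hGdeg : ∀ p : W × ZMod k, δ ≤ ((cyc H' u y k).neighborSet p).ncard := by
    refine cyc_deg hone ?_ ?_ ?_
    · intro a hau hay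
      have : H'.neighborSet a = H.neighborSet a := by
        ext b
        simp only [hH', SimpleGraph.mem_neighborSet, SimpleGraph.deleteEdges_adj,
          Set.mem_singleton_iff]
        constructor
        · exact fun h => h.1
        · intro h
          refine ⟨h, fun hab => ?_⟩
          rw [Sym2.eq_iff] at hab
          rcases hab with ⟨h1, -⟩ | ⟨h2, -⟩
          · exact hau h1
          · exact hay h2
      rw [this]
      exact hdeg a
    · have hset : H'.neighborSet u = H.neighborSet u \ {y} := by
        ext b
        simp only [hH', SimpleGraph.mem_neighborSet, SimpleGraph.deleteEdges_adj,
          Set.mem_singleton_iff, Set.mem_diff]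
        constructor
        · rintro ⟨h1, h2⟩
          exact ⟨h1, fun hb => h2 (by rw [hb])⟩
        · rintro ⟨h1, h2⟩
          exact ⟨h1, fun hb => h2 (Sym2.congr_right.mp hb)⟩
      have hmemy : y ∈ H.neighborSet u := heE
      rw [hset, Set.ncard_diff_singleton_of_mem hmemy]
      have := hdeg u
      have hpos : 1 ≤ (H.neighborSet u).ncard := by
        have := Set.ncard_pos (s := H.neighborSet u) (Set.toFinite _) |>.mpr ⟨y, hmemy⟩
        omega
      omega
    · have hset : H'.neighborSet y = H.neighborSet y \ {u} := by
        ext b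
        simp only [hH', SimpleGraph.mem_neighborSet, SimpleGraph.deleteEdges_adj,
          Set.mem_singleton_iff, Set.mem_diff]
        constructor
        · rintro ⟨h1, h2⟩
          refine ⟨h1, fun hb => h2 ?_⟩
          rw [hb, Sym2.eq_swap]
        · rintro ⟨h1, h2⟩
          refine ⟨h1, fun hb => h2 ?_⟩
          rw [show s(u, y) = s(y, u) from Sym2.eq_swap] at hb
          exact Sym2.congr_right.mp hb
      have hmemu : u ∈ H.neighborSet y := heE.symm
      rw [hset, Set.ncard_diff_singleton_of_mem hmemu]
      have := hdeg y
      have hpos : 1 ≤ (H.neighborSet y).ncard := by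
        have := Set.ncard_pos (s := H.neighborSet y) (Set.toFinite _) |>.mpr ⟨u, hmemu⟩
        omega
      omega
  have hGrad := cyc_radius (H' := H') (u := u) (y := y) (by omega : 1 < k)
    (by omega : 1 ≤ g) (by omega : 1 ≤ r) hkg2r ψ hψlip hψy hψu hψsurj
  -- transfer along an equivalence with Fin (k * f)
  haveI := hconn.nonempty
  have hfpos : 0 < f := by
    rw [← hcard]
    exact Fintype.card_pos
  have hcard2 : Fintype.card (W × ZMod k) = k * f := by
    rw [Fintype.card_prod, hcard, ZMod.card k]
    ring
  set ρ : (W × ZMod k) ≃ Fin (k * f) := Fintype.equivFinOfCardEq hcard2 with hρ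
  refine ⟨(cyc H' u y k).comap (ρ.symm : Fin (k * f) → W × ZMod k), ?_, ?_, ?_, ?_⟩
  case _ => -- connected
    haveI : Nonempty (Fin (k * f)) := ⟨⟨0, by positivity⟩⟩
    refine ⟨fun i j => ?_⟩
    have hr2 := hGconn.preconnected (ρ.symm i) (ρ.symm j)
    obtain ⟨w⟩ := hr2
    exact ⟨(w.map (⟨fun p => ρ p, fun {a b} h => by
        show (cyc H' u y k).Adj (ρ.symm (ρ a)) (ρ.symm (ρ b))
        simpa using h⟩ :
        cyc H' u y k →g (cyc H' u y k).comap (ρ.symm : Fin (k * f) → W × ZMod k))).copy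
      (Equiv.apply_symm_apply ρ i) (Equiv.apply_symm_apply ρ j)⟩
  case _ => -- girth
    rw [SimpleGraph.le_egirth]
    intro a w hw
    have hinj : Function.Injective
        (SimpleGraph.Hom.comap (ρ.symm : Fin (k * f) → W × ZMod k) (cyc H' u y k)) :=
      fun a b h => ρ.symm.injective h
    have hcyc2 := (SimpleGraph.Walk.map_isCycle_iff_of_injective hinj).mpr hw
    have := hGgirth _ _ hcyc2
    rw [SimpleGraph.Walk.length_map] at this
    exact_mod_cast this
  case _ => -- degree
    intro i
    have hset : ((cyc H' u y k).comap (ρ.symm : Fin (k * f) → W × ZMod k)).neighborSet i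
        = (ρ.symm) ⁻¹' ((cyc H' u y k).neighborSet (ρ.symm i)) := rfl
    rw [hset, ← Equiv.image_symm_eq_preimage, Set.ncard_image_of_injective _
      (ρ.symm.symm.injective)]
    exact hGdeg _
  case _ => -- radius
    haveI : Nonempty (Fin (k * f)) := ⟨⟨0, by positivity⟩⟩
    have hGC : ((cyc H' u y k).comap (ρ.symm : Fin (k * f) → W × ZMod k)).Connected := by
      refine ⟨fun i j => ?_⟩
      have hr2 := hGconn.preconnected (ρ.symm i) (ρ.symm j)
      obtain ⟨w⟩ := hr2
      exact ⟨(w.map (⟨fun p => ρ p, fun {a b} h => by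
          show (cyc H' u y k).Adj (ρ.symm (ρ a)) (ρ.symm (ρ b))
          simpa using h⟩ :
          cyc H' u y k →g (cyc H' u y k).comap (ρ.symm : Fin (k * f) → W × ZMod k))).copy
        (Equiv.apply_symm_apply ρ i) (Equiv.apply_symm_apply ρ j)⟩
    rw [graphRadius]
    refine le_ciInf fun i => ?_
    obtain ⟨y₀, hy₀⟩ := hGrad (ρ.symm i)
    rw [eccentricity]
    have hdist : r ≤ ((cyc H' u y k).comap
        (ρ.symm : Fin (k * f) → W × ZMod k)).dist i (ρ y₀) := by
      obtain ⟨p, hplen⟩ :=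
        (hGC.preconnected i (ρ y₀)).exists_walk_length_eq_dist
      have hq := hy₀ ((p.map (SimpleGraph.Hom.comap
        (ρ.symm : Fin (k * f) → W × ZMod k) (cyc H' u y k))).copy rfl (by simp))
      exact le_of_le_of_eq hq ((SimpleGraph.Walk.length_copy _ _ _).trans
        ((SimpleGraph.Walk.length_map _ _).trans hplen))
    have hbdd : BddAbove (Set.range fun w =>
        ((cyc H' u y k).comap (ρ.symm : Fin (k * f) → W × ZMod k)).dist i w) :=
      Set.Finite.bddAbove (Set.finite_range _)
    exact le_trans hdist (le_ciSup hbdd (ρ y₀))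
end

section
/- Let G be a connected simple graph on n vertices with girth at least 2k (k ≥ 2), minimum degree δ ≥ 2, and radius r, and suppose n ≤ c(r+1)δ^(k−1) for some c > 0. Then there exists a (connected, induced) subgraph of G with at most (2k+1)·c·δ^(k−1) vertices and at least (1/2)·δ²·(δ−1)^(k−2) edges; in particular, there exists a graph of girth at least 2k on at most (2k+1)cδ^(k−1) vertices with at least (1/2)δ²(δ−1)^(k−2) edges. -/
open Finset SimpleGraph SimpleGraph.Walk

attribute [local instance] Classical.propDecidable

namespace Stmt14Aux

set_option linter.unusedSectionVars false
set_option linter.unusedVariables false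

variable {V : Type*} {G : SimpleGraph V}

lemma isPath_loop_eq_nil {a : V} (p : G.Walk a a) (hp : p.IsPath) : p = SimpleGraph.Walk.nil :=
  congrArg Subtype.val (SimpleGraph.Path.loop_eq ⟨p, hp⟩)

lemma snd_eq_of_start_edge {a y b z : V} (h : G.Adj a y) (q : G.Walk y b)
    (hq : (Walk.cons h q).IsPath) (he : s(a, z) ∈ (Walk.cons h q).edges) :
    z = y := by
  rw [SimpleGraph.Walk.edges_cons, List.mem_cons] at he
  rcases he with he | he
  · rcases Sym2.eq_iff.mp he with ⟨-, rfl⟩ | ⟨h1, rfl⟩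
    · rfl
    · exact absurd h1 h.ne
  · exact absurd (q.fst_mem_support_of_mem_edges he)
      ((SimpleGraph.Walk.cons_isPath_iff h q).mp hq).2

lemma exists_cycle_of_two_paths :
    ∀ (N : ℕ) {a b : V} (p q : G.Walk a b), p.IsPath → q.IsPath → p ≠ q → p.length ≤ N →
      ∃ (c : V) (w : G.Walk c c), w.IsCycle ∧ w.length ≤ p.length + q.length := by
  intro N
  induction N with
  | zero =>
    intro a b p q hp hq hne hlen
    cases p with
    | nil => exact absurd (isPath_loop_eq_nil q hq).symm hne
    | cons h p' => simp [Walk.length_cons] at hlen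
  | succ N ih =>
    intro a b p q hp hq hne hlen
    cases p with
    | nil => exact absurd (isPath_loop_eq_nil q hq).symm hne
    | @cons _ x _ h p' =>
      cases q with
      | nil => simpa using isPath_loop_eq_nil _ hp
      | @cons _ y _ h' q' =>
        by_cases hxy : x = y
        · subst hxy
          have hne' : p' ≠ q' := by rintro rfl; exact hne rfl
          obtain ⟨c, w, hw, hwl⟩ := ih p' q' hp.of_cons hq.of_cons hne'
            (by simp only [Walk.length_cons] at hlen; omega)
          exact ⟨c, w, hw, by simp only [Walk.length_cons]; omega⟩
        · by_cases hxq : x ∈ (Walk.cons h' q').support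
          · have hedge : s(a, x) ∉ ((Walk.cons h' q').takeUntil x hxq).reverse.edges := by
              rw [Walk.edges_reverse, List.mem_reverse]
              intro hmem
              exact hxy (snd_eq_of_start_edge h' q' hq
                ((Walk.cons h' q').edges_takeUntil_subset hxq hmem))
            refine ⟨a, Walk.cons h ((Walk.cons h' q').takeUntil x hxq).reverse, ?_, ?_⟩
            · rw [Walk.cons_isCycle_iff]
              exact ⟨(hq.takeUntil hxq).reverse, hedge⟩
            · have h1 := (Walk.cons h' q').length_takeUntil_le hxq
              simp only [Walk.length_cons, Walk.length_reverse] at *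
              omega
          · by_cases hyp : y ∈ (Walk.cons h p').support
            · have hedge : s(a, y) ∉ ((Walk.cons h p').takeUntil y hyp).reverse.edges := by
                rw [Walk.edges_reverse, List.mem_reverse]
                intro hmem
                exact hxy (snd_eq_of_start_edge h p' hp
                  ((Walk.cons h p').edges_takeUntil_subset hyp hmem)).symm
              refine ⟨a, Walk.cons h' ((Walk.cons h p').takeUntil y hyp).reverse, ?_, ?_⟩
              · rw [Walk.cons_isCycle_iff]
                exact ⟨(hp.takeUntil hyp).reverse, hedge⟩
              · have h1 := (Walk.cons h p').length_takeUntil_le hyp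
                simp only [Walk.length_cons, Walk.length_reverse] at *
                omega
            · have hps : a ∉ p'.support := ((Walk.cons_isPath_iff h p').mp hp).2
              have hnq : (Walk.cons h.symm (Walk.cons h' q')).IsPath := by
                rw [Walk.cons_isPath_iff]; exact ⟨hq, hxq⟩
              have hne2 : p' ≠ Walk.cons h.symm (Walk.cons h' q') := by
                intro hEq
                apply hps
                rw [hEq]
                simp [Walk.support_cons]
              obtain ⟨c, w, hw, hwl⟩ := ih p' _ hp.of_cons hnq hne2
                (by simp only [Walk.length_cons] at hlen; omega)
              refine ⟨c, w, hw, ?_⟩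
              simp only [Walk.length_cons] at *
              omega


lemma path_unique_of_girth {k : ℕ} (hg : (2 * k : ℕ∞) ≤ G.egirth) {a b : V}
    (p q : G.Walk a b) (hp : p.IsPath) (hq : q.IsPath)
    (hlt : p.length + q.length < 2 * k) : p = q := by
  by_contra hne
  obtain ⟨c, w, hw, hwl⟩ := exists_cycle_of_two_paths p.length p q hp hq hne le_rfl
  have h2 := SimpleGraph.le_egirth.mp hg c w hw
  have h3 : (2 * k : ℕ) ≤ w.length := by exact_mod_cast h2
  omega

lemma dist_le_of_mem_support {u v y : V} (w : G.Walk u v) (hy : y ∈ w.support) :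
    G.dist u y ≤ w.length :=
  le_trans (SimpleGraph.dist_le _) (w.length_takeUntil_le hy)

lemma not_mem_support_geodesic {u z y : V} (w : G.Walk u z) (hlen : w.length = G.dist u z)
    (hyz : y ≠ z) (hdy : G.dist u z ≤ G.dist u y) : y ∉ w.support := by
  intro hy
  have h1 : G.dist u y ≤ (w.takeUntil y hy).length := SimpleGraph.dist_le _
  have h2 : (w.takeUntil y hy).length + (w.dropUntil y hy).length = w.length := by
    rw [← Walk.length_append, w.take_spec hy]
  have h3 : (w.dropUntil y hy).length ≠ 0 := fun h0 => hyz (Walk.eq_of_length_eq_zero h0)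
  omega

lemma unique_low_neighbor {k : ℕ} (hconn : G.Connected) (hg : (2 * k : ℕ∞) ≤ G.egirth)
    {u y z1 z2 : V} (h1 : G.Adj y z1) (h2 : G.Adj y z2)
    (hd1 : G.dist u z1 ≤ G.dist u y) (hd2 : G.dist u z2 ≤ G.dist u y)
    (hsum : G.dist u z1 + G.dist u z2 + 2 < 2 * k) : z1 = z2 := by
  obtain ⟨w1, hw1p, hw1l⟩ := hconn.exists_path_of_dist u z1
  obtain ⟨w2, hw2p, hw2l⟩ := hconn.exists_path_of_dist u z2
  have hy1 : y ∉ w1.support := not_mem_support_geodesic w1 hw1l h1.ne hd1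
  have hy2 : y ∉ w2.support := not_mem_support_geodesic w2 hw2l h2.ne hd2
  have hp1 : (w1.concat h1.symm).IsPath := by
    rw [← Walk.isPath_reverse_iff, Walk.reverse_concat, Walk.cons_isPath_iff]
    exact ⟨hw1p.reverse, by rwa [Walk.support_reverse, List.mem_reverse]⟩
  have hp2 : (w2.concat h2.symm).IsPath := by
    rw [← Walk.isPath_reverse_iff, Walk.reverse_concat, Walk.cons_isPath_iff]
    exact ⟨hw2p.reverse, by rwa [Walk.support_reverse, List.mem_reverse]⟩
  have heq : w1.concat h1.symm = w2.concat h2.symm := by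
    apply path_unique_of_girth hg _ _ hp1 hp2
    rw [Walk.length_concat, Walk.length_concat, hw1l, hw2l]
    omega
  obtain ⟨hv, -⟩ := Walk.concat_inj heq
  exact hv

lemma exists_parent (hconn : G.Connected) {u z : V} (hz : 1 ≤ G.dist u z) :
    ∃ y, G.Adj z y ∧ G.dist u y + 1 = G.dist u z := by
  obtain ⟨w, hwp, hwl⟩ := hconn.exists_path_of_dist u z
  cases hrev : w.reverse with
  | nil =>
    have : w.length = 0 := by
      rw [← Walk.length_reverse, hrev, Walk.length_nil]
    omega
  | @cons _ y0 _ hadj r' =>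
    refine ⟨y0, hadj, ?_⟩
    have hl : r'.length + 1 = G.dist u z := by
      rw [← hwl, ← Walk.length_reverse w, hrev, Walk.length_cons]
    have hle : G.dist u y0 ≤ r'.length := by
      have := SimpleGraph.dist_le r'.reverse
      rwa [Walk.length_reverse] at this
    have hge : G.dist u z ≤ G.dist u y0 + 1 := by
      have ht := hconn.dist_triangle (u := u) (v := y0) (w := z)
      have : G.dist y0 z ≤ 1 := by
        have := SimpleGraph.dist_le (Walk.cons hadj.symm Walk.nil)
        simpa using this
      omega
    omega

lemma exists_at_dist (hconn : G.Connected) (v0 : V) :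
    ∀ (d : ℕ) (x : V), G.dist v0 x = d → ∀ j ≤ d, ∃ y, G.dist v0 y = j := by
  intro d
  induction d with
  | zero => intro x hx j hj; exact ⟨x, by omega⟩
  | succ d ih =>
    intro x hx j hj
    obtain ⟨y, -, hy⟩ := exists_parent hconn (u := v0) (z := x) (by omega)
    rcases Nat.lt_or_ge j (d+1) with hlt | hge
    · exact ih y (by omega) j (by omega)
    · exact ⟨x, by omega⟩


lemma reachable_induce {s' : Set V} {a b : V} (w : G.Walk a b) (hsub : ∀ x ∈ w.support, x ∈ s') :
    (G.induce s').Reachable ⟨a, hsub a w.start_mem_support⟩ ⟨b, hsub b w.end_mem_support⟩ := by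
  induction w with
  | nil => exact SimpleGraph.Reachable.refl _
  | @cons a x b h w' ih =>
    have hx : x ∈ s' := hsub x (by simp [Walk.support_cons])
    have hsub' : ∀ z ∈ w'.support, z ∈ s' := fun z hz => hsub z (by simp [Walk.support_cons, hz])
    refine SimpleGraph.Reachable.trans ?_ (ih hsub')
    exact SimpleGraph.Adj.reachable (by exact h)

lemma ball_connected (hconn : G.Connected) (u : V) (k : ℕ) [Fintype V] :
    (G.induce ((univ.filter (fun v => G.dist u v ≤ k) : Finset V) : Set V)).Connected := by
  set S : Finset V := univ.filter (fun v => G.dist u v ≤ k) with hS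
  have huS : u ∈ (S : Set V) := by
    rw [Finset.mem_coe, hS, Finset.mem_filter]
    simp [SimpleGraph.dist_self]
  have key : ∀ x : (S : Set V), (G.induce (S : Set V)).Reachable ⟨u, huS⟩ x := by
    rintro ⟨x, hx⟩
    obtain ⟨w, -, hwl⟩ := hconn.exists_path_of_dist u x
    have hsub : ∀ z ∈ w.support, z ∈ (S : Set V) := by
      intro z hz
      rw [Finset.mem_coe, hS, Finset.mem_filter]
      refine ⟨Finset.mem_univ _, ?_⟩
      have h1 := dist_le_of_mem_support w hz
      have hx' : G.dist u x ≤ k := by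
        have := (Finset.mem_filter.mp (Finset.mem_coe.mp hx)).2
        exact this
      omega
    exact reachable_induce w hsub
  rw [SimpleGraph.connected_iff]
  exact ⟨fun x y => (key x).symm.trans (key y), ⟨⟨u, huS⟩⟩⟩

lemma induce_egirth_le {k : ℕ} (hg : (2 * k : ℕ∞) ≤ G.egirth) (s' : Set V) :
    (2 * k : ℕ∞) ≤ (G.induce s').egirth := by
  rw [SimpleGraph.le_egirth]
  intro a w hw
  have hinj : Function.Injective (fun x : s' => (x : V)) := Subtype.val_injective
  let f : G.induce s' →g G := ⟨fun x => x.1, fun {x y} h => h⟩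
  have hcyc : (w.map f).IsCycle := hw.map hinj
  have := SimpleGraph.le_egirth.mp hg _ (w.map f) hcyc
  rwa [SimpleGraph.Walk.length_map] at this

variable [Fintype V]

lemma neighbor_card {δ : ℕ} (hδ : ∀ v, δ ≤ (G.neighborSet v).ncard) (y : V) :
    δ ≤ (univ.filter (fun z => G.Adj y z)).card := by
  have h : G.neighborSet y = ↑(univ.filter (fun z => G.Adj y z)) := by
    ext z; simp [SimpleGraph.mem_neighborSet]
  have := hδ y
  rwa [h, Set.ncard_coe_finset] at this

lemma dist_le_succ_of_adj (hconn : G.Connected) {u y z : V} (h : G.Adj y z) :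
    G.dist u z ≤ G.dist u y + 1 := by
  have ht := hconn.dist_triangle (u := u) (v := y) (w := z)
  have : G.dist y z ≤ 1 := by
    have := SimpleGraph.dist_le (Walk.cons h Walk.nil)
    simpa using this
  omega

lemma sphere_step {k δ : ℕ} (hconn : G.Connected) (hg : (2 * k : ℕ∞) ≤ G.egirth)
    (hδ : ∀ v, δ ≤ (G.neighborSet v).ncard) {u : V} {i : ℕ}
    (hi : 1 ≤ i) (hik : i + 1 ≤ k - 1) (hk : 2 ≤ k) :
    (δ - 1) * (univ.filter (fun v => G.dist u v = i)).card ≤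
      (univ.filter (fun v => G.dist u v = i + 1)).card := by
  set Si := univ.filter (fun v => G.dist u v = i) with hSi
  set Si1 := univ.filter (fun v => G.dist u v = i + 1) with hSi1
  -- parent function
  have hpar : ∀ z : V, ∃ y, G.dist u z = i + 1 → (G.Adj z y ∧ G.dist u y = i) := by
    intro z
    by_cases hz : G.dist u z = i + 1
    · obtain ⟨y, hy1, hy2⟩ := exists_parent hconn (u := u) (z := z) (by omega)
      exact ⟨y, fun _ => ⟨hy1, by omega⟩⟩
    · exact ⟨z, fun h => absurd h hz⟩
  choose par hparspec using hpar
  have hmaps : ∀ z ∈ Si1, par z ∈ Si := by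
    intro z hz
    rw [hSi1, Finset.mem_filter] at hz
    rw [hSi, Finset.mem_filter]
    exact ⟨Finset.mem_univ _, (hparspec z hz.2).2⟩
  have hsum := Finset.card_eq_sum_card_fiberwise hmaps
  have hfiber : ∀ y ∈ Si, δ - 1 ≤ (Si1.filter (fun z => par z = y)).card := by
    intro y hy
    rw [hSi, Finset.mem_filter] at hy
    obtain ⟨-, hyd⟩ := hy
    set Ny := univ.filter (fun z => G.Adj y z) with hNy
    set Ay := univ.filter (fun z => G.Adj y z ∧ G.dist u z = i + 1) with hAy
    set By := univ.filter (fun z => G.Adj y z ∧ G.dist u z ≤ i) with hBy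
    have hNsub : Ny ⊆ Ay ∪ By := by
      intro z hz
      rw [hNy, Finset.mem_filter] at hz
      have hle : G.dist u z ≤ i + 1 := by
        have := dist_le_succ_of_adj hconn (u := u) hz.2
        omega
      rw [Finset.mem_union, hAy, hBy, Finset.mem_filter, Finset.mem_filter]
      rcases Nat.lt_or_ge (G.dist u z) (i+1) with h | h
      · exact Or.inr ⟨Finset.mem_univ _, hz.2, by omega⟩
      · exact Or.inl ⟨Finset.mem_univ _, hz.2, by omega⟩
    have hBcard : By.card ≤ 1 := by
      rw [Finset.card_le_one]
      intro z1 hz1 z2 hz2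
      rw [hBy, Finset.mem_filter] at hz1 hz2
      exact unique_low_neighbor hconn hg (u := u) hz1.2.1 hz2.2.1 (by omega) (by omega) (by omega)
    have hA : δ - 1 ≤ Ay.card := by
      have h1 : δ ≤ Ny.card := neighbor_card hδ y
      have h2 : Ny.card ≤ Ay.card + By.card :=
        le_trans (Finset.card_le_card hNsub) (Finset.card_union_le _ _)
      omega
    refine le_trans hA (Finset.card_le_card ?_)
    intro z hz
    rw [hAy, Finset.mem_filter] at hz
    obtain ⟨-, hadj, hzd⟩ := hz
    have hzSi1 : z ∈ Si1 := by rw [hSi1, Finset.mem_filter]; exact ⟨Finset.mem_univ _, hzd⟩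
    rw [Finset.mem_filter]
    refine ⟨hzSi1, ?_⟩
    have hps := hparspec z hzd
    exact (unique_low_neighbor hconn hg (u := u) hadj.symm hps.1 (by omega) (by omega)
      (by omega)).symm ▸ rfl
  calc (δ - 1) * Si.card = ∑ _y ∈ Si, (δ - 1) := by
        rw [Finset.sum_const, smul_eq_mul, mul_comm]
    _ ≤ ∑ y ∈ Si, (Si1.filter (fun z => par z = y)).card := Finset.sum_le_sum hfiber
    _ = Si1.card := hsum.symm

lemma sphere_card {k δ : ℕ} (hconn : G.Connected) (hg : (2 * k : ℕ∞) ≤ G.egirth)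
    (hδ : ∀ v, δ ≤ (G.neighborSet v).ncard) (hδ2 : 2 ≤ δ) (hk : 2 ≤ k) (u : V) :
    ∀ j : ℕ, j + 1 ≤ k - 1 → δ * (δ - 1) ^ j ≤
      (univ.filter (fun v => G.dist u v = j + 1)).card := by
  intro j
  induction j with
  | zero =>
    intro hj
    have h1 : univ.filter (fun v => G.dist u v = 1) = univ.filter (fun z => G.Adj u z) := by
      apply Finset.filter_congr
      intro z _
      simp [SimpleGraph.dist_eq_one_iff_adj]
    rw [h1]
    simpa using neighbor_card hδ u
  | succ j ih =>
    intro hj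
    have h1 := ih (by omega)
    have h2 := sphere_step hconn hg hδ (u := u) (i := j + 1) (by omega) (by omega) hk
    calc δ * (δ - 1) ^ (j + 1) = (δ - 1) * (δ * (δ - 1) ^ j) := by ring
      _ ≤ (δ - 1) * (univ.filter (fun v => G.dist u v = j + 1)).card :=
          Nat.mul_le_mul_left _ h1
      _ ≤ _ := h2



lemma edge_count {k δ : ℕ} (hconn : G.Connected) (hg : (2 * k : ℕ∞) ≤ G.egirth)
    (hδ : ∀ v, δ ≤ (G.neighborSet v).ncard) (hδ2 : 2 ≤ δ) (hk : 2 ≤ k) (u : V) :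
    δ ^ 2 * (δ - 1) ^ (k - 2) ≤
      2 * (G.induce ((univ.filter (fun v => G.dist u v ≤ k) : Finset V) : Set V)).edgeSet.ncard := by
  set S : Finset V := univ.filter (fun v => G.dist u v ≤ k) with hS
  set Bk1 : Finset V := univ.filter (fun v => G.dist u v ≤ k - 1) with hBk1
  set D : Finset (V × V) := (Bk1 ×ˢ univ).filter (fun p => G.Adj p.1 p.2) with hD
  -- sphere is inside ball
  have hsph : δ * (δ - 1) ^ (k - 2) ≤ Bk1.card := by
    have h1 := sphere_card hconn hg hδ hδ2 hk u (k - 2) (by omega)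
    refine le_trans h1 (Finset.card_le_card ?_)
    intro z hz
    rw [Finset.mem_filter] at hz ⊢
    exact ⟨hz.1, by omega⟩
  -- δ * Bk1.card ≤ D.card
  have hmaps : ∀ p ∈ D, p.1 ∈ Bk1 := by
    intro p hp
    rw [hD, Finset.mem_filter, Finset.mem_product] at hp
    exact hp.1.1
  have hDcard : δ * Bk1.card ≤ D.card := by
    rw [Finset.card_eq_sum_card_fiberwise hmaps]
    calc δ * Bk1.card = ∑ _y ∈ Bk1, δ := by rw [Finset.sum_const, smul_eq_mul, mul_comm]
      _ ≤ ∑ y ∈ Bk1, (D.filter (fun p => p.1 = y)).card := by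
          apply Finset.sum_le_sum
          intro y hy
          refine le_trans (neighbor_card hδ y) ?_
          apply Finset.card_le_card_of_injOn (fun z => (y, z))
          · intro z hz
            rw [Finset.mem_coe, Finset.mem_filter] at hz
            rw [Finset.mem_coe, Finset.mem_filter]
            refine ⟨?_, rfl⟩
            rw [hD, Finset.mem_filter, Finset.mem_product]
            exact ⟨⟨hy, Finset.mem_univ _⟩, hz.2⟩
          · intro z1 _ z2 _ h
            exact (Prod.mk.injEq _ _ _ _).mp h |>.2
  -- D.card ≤ 2 * E'.card
  set E' : Finset (Sym2 V) := D.image (fun p => s(p.1, p.2)) with hE'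
  have hD2 : D.card ≤ 2 * E'.card := by
    apply Finset.card_le_mul_card_image
    intro e he
    induction e with
    | h a b =>
      have hsub : D.filter (fun p => s(p.1, p.2) = s(a, b)) ⊆ {(a, b), (b, a)} := by
        intro p hp
        rw [Finset.mem_filter] at hp
        rcases Sym2.eq_iff.mp hp.2 with ⟨h1, h2⟩ | ⟨h1, h2⟩
        · simp [Prod.ext_iff, h1, h2]
        · simp [Prod.ext_iff, h1, h2]
      refine le_trans (Finset.card_le_card hsub) ?_
      refine le_trans (Finset.card_insert_le _ _) ?_
      simp
  -- E'.card ≤ ncard edgeSet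
  have hinj : Function.Injective (Sym2.map (fun x : (S : Set V) => x.1)) :=
    Sym2.map.injective (fun a b h => Subtype.ext h)
  have hEsub : (E' : Set (Sym2 V)) ⊆
      Sym2.map (fun x : (S : Set V) => x.1) '' (G.induce (S : Set V)).edgeSet := by
    intro e he
    rw [Finset.mem_coe, hE', Finset.mem_image] at he
    obtain ⟨p, hp, rfl⟩ := he
    rw [hD, Finset.mem_filter, Finset.mem_product] at hp
    obtain ⟨⟨hp1, -⟩, hadj⟩ := hp
    have h1 : p.1 ∈ (S : Set V) := by
      rw [Finset.mem_coe, hS, Finset.mem_filter]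
      rw [hBk1, Finset.mem_filter] at hp1
      exact ⟨Finset.mem_univ _, by omega⟩
    have h2 : p.2 ∈ (S : Set V) := by
      rw [Finset.mem_coe, hS, Finset.mem_filter]
      rw [hBk1, Finset.mem_filter] at hp1
      have := dist_le_succ_of_adj hconn (u := u) hadj
      exact ⟨Finset.mem_univ _, by omega⟩
    refine ⟨s(⟨p.1, h1⟩, ⟨p.2, h2⟩), ?_, by rw [Sym2.map_pair_eq]⟩
    rw [SimpleGraph.mem_edgeSet]
    exact hadj
  have hfin : (Sym2.map (fun x : (S : Set V) => x.1) '' (G.induce (S : Set V)).edgeSet).Finite :=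
    ((G.induce (S : Set V)).edgeSet.toFinite).image _
  have hE3 : E'.card ≤ (G.induce (S : Set V)).edgeSet.ncard := by
    have := Set.ncard_le_ncard hEsub hfin
    rwa [Set.ncard_coe_finset, Set.ncard_image_of_injective _ hinj] at this
  have harith : δ ^ 2 * (δ - 1) ^ (k - 2) = δ * (δ * (δ - 1) ^ (k - 2)) := by ring
  calc δ ^ 2 * (δ - 1) ^ (k - 2) = δ * (δ * (δ - 1) ^ (k - 2)) := harith
    _ ≤ δ * Bk1.card := Nat.mul_le_mul_left _ hsph
    _ ≤ D.card := hDcard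
    _ ≤ 2 * E'.card := hD2
    _ ≤ 2 * (G.induce (S : Set V)).edgeSet.ncard := Nat.mul_le_mul_left _ hE3


lemma exists_center [Fintype V] (hconn : G.Connected) :
    ∃ v0 w0 : V, G.dist v0 w0 = graphRadius G := by
  have hne : Nonempty V := hconn.nonempty
  have h1 : graphRadius G ∈ Set.range (eccentricity G) := by
    rw [graphRadius, iInf]
    exact Nat.sInf_mem (Set.range_nonempty _)
  obtain ⟨v0, hv0⟩ := h1
  have h2 : eccentricity G v0 ∈ Set.range (G.dist v0) := by
    rw [eccentricity, iSup]
    exact Nat.sSup_mem (Set.range_nonempty _) ((Set.finite_range _).bddAbove)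
  obtain ⟨w0, hw0⟩ := h2
  exact ⟨v0, w0, by rw [hw0, hv0]⟩

end Stmt14Aux

open Stmt14Aux in
/-- If `G` is connected on `n` vertices with girth at least `2k` (`k ≥ 2`),
minimum degree `δ ≥ 2` and radius `r`, and `n ≤ c(r+1)δ^(k-1)` for some `c > 0`, then
there is a connected induced subgraph of `G` (in particular of girth at least `2k`)
with at most `(2k+1)cδ^(k-1)` vertices and at least `(1/2)δ²(δ-1)^(k-2)` edges. -/
theorem radius_girth_stmt14 {V : Type*} [Fintype V] (G : SimpleGraph V) (k δ : ℕ)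
    (hk : 2 ≤ k) (hδ2 : 2 ≤ δ) (hconn : G.Connected)
    (hgirth : (2 * k : ℕ∞) ≤ G.egirth)
    (hδ : ∀ v : V, δ ≤ (G.neighborSet v).ncard)
    (c : ℝ) (hc : 0 < c)
    (hn : (Fintype.card V : ℝ) ≤ c * (graphRadius G + 1) * (δ : ℝ) ^ (k - 1)) :
    ∃ s : Finset V, (G.induce (s : Set V)).Connected ∧
      (2 * k : ℕ∞) ≤ (G.induce (s : Set V)).egirth ∧
      ((s.card : ℝ) ≤ (2 * k + 1) * c * (δ : ℝ) ^ (k - 1)) ∧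
      δ ^ 2 * (δ - 1) ^ (k - 2) ≤ 2 * (G.induce (s : Set V)).edgeSet.ncard := by
  classical
  obtain ⟨v0, w0, hvw⟩ := exists_center hconn
  set r := graphRadius G with hrdef
  have hlevel : ∀ j ≤ r, ∃ x, G.dist v0 x = j :=
    fun j hj => exists_at_dist hconn v0 r w0 hvw j hj
  obtain ⟨q, hq⟩ : ∃ q, q = r / (2 * k + 1) := ⟨_, rfl⟩
  set m := q + 1 with hm
  have hxc0 : ∀ j : ℕ, ∃ x, j < m → G.dist v0 x = j * (2 * k + 1) := by
    intro j
    by_cases hj : j < m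
    · have hjr : j * (2 * k + 1) ≤ r := by
        calc j * (2 * k + 1) ≤ q * (2 * k + 1) := Nat.mul_le_mul_right _ (by omega)
          _ = (r / (2 * k + 1)) * (2 * k + 1) := by rw [hq]
          _ ≤ r := Nat.div_mul_le_self _ _
      obtain ⟨x, hx⟩ := hlevel (j * (2 * k + 1)) hjr
      exact ⟨x, fun _ => hx⟩
    · exact ⟨v0, fun h => absurd h hj⟩
  choose xc hxc using hxc0
  set Bl : ℕ → Finset V := fun j => univ.filter (fun y => G.dist (xc j) y ≤ k) with hBl
  have hcdist : ∀ i < m, ∀ j < m, i < j → 2 * k + 1 ≤ G.dist (xc i) (xc j) := by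
    intro i hi j hj hij
    have h1 := hxc i hi
    have h2 := hxc j hj
    have ht := hconn.dist_triangle (u := v0) (v := xc i) (w := xc j)
    have h5 : i * (2 * k + 1) + (2 * k + 1) ≤ i * (2 * k + 1) + G.dist (xc i) (xc j) := by
      calc i * (2 * k + 1) + (2 * k + 1) = (i + 1) * (2 * k + 1) := by ring
        _ ≤ j * (2 * k + 1) := Nat.mul_le_mul_right _ (by omega)
        _ = G.dist v0 (xc j) := h2.symm
        _ ≤ G.dist v0 (xc i) + G.dist (xc i) (xc j) := ht
        _ = i * (2 * k + 1) + G.dist (xc i) (xc j) := by rw [h1]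
    exact le_of_add_le_add_left h5
  have hdisj : ∀ i ∈ Finset.range m, ∀ j ∈ Finset.range m, i ≠ j → Disjoint (Bl i) (Bl j) := by
    intro i hi j hj hij
    rw [Finset.mem_range] at hi hj
    rw [Finset.disjoint_left]
    intro y hyi hyj
    rw [hBl, Finset.mem_filter] at hyi hyj
    have ht := hconn.dist_triangle (u := xc i) (v := y) (w := xc j)
    have hcm : G.dist y (xc j) = G.dist (xc j) y := SimpleGraph.dist_comm
    rcases Nat.lt_or_ge i j with h | h
    · have := hcdist i hi j hj h
      omega
    · have hji : j < i := by omega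
      have := hcdist j hj i hi hji
      have hcm2 : G.dist (xc i) (xc j) = G.dist (xc j) (xc i) := SimpleGraph.dist_comm
      omega
  have hsum : ∑ j ∈ Finset.range m, (Bl j).card ≤ Fintype.card V := by
    rw [← Finset.card_biUnion hdisj]
    exact Finset.card_le_univ _
  obtain ⟨j0, hj0m, hj0min⟩ :=
    Finset.exists_min_image (Finset.range m) (fun j => (Bl j).card) ⟨0, by simp [hm]⟩
  have hmin : m * (Bl j0).card ≤ Fintype.card V := by
    calc m * (Bl j0).card = ∑ _j ∈ Finset.range m, (Bl j0).card := by
          rw [Finset.sum_const, Finset.card_range, smul_eq_mul]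
      _ ≤ ∑ j ∈ Finset.range m, (Bl j).card := Finset.sum_le_sum (fun j hj => hj0min j hj)
      _ ≤ _ := hsum
  have hr1 : r + 1 ≤ m * (2 * k + 1) := by
    have h1 : r + 1 ≤ (2 * k + 1) * (r / (2 * k + 1)) + (2 * k + 1) := by
      conv_lhs => rw [← Nat.div_add_mod r (2 * k + 1)]
      rw [Nat.add_assoc]
      exact Nat.add_le_add_left (Nat.succ_le_of_lt (Nat.mod_lt _ (by omega))) _
    have h2 : (2 * k + 1) * (r / (2 * k + 1)) + (2 * k + 1) = m * (2 * k + 1) := by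
      rw [hm, ← hq]; ring
    rw [h2] at h1
    exact h1
  refine ⟨Bl j0, ?_, ?_, ?_, ?_⟩
  · exact ball_connected hconn (xc j0) k
  · exact induce_egirth_le hgirth _
  · have hm0 : (0 : ℝ) < (m : ℝ) := by
      have : 0 < m := Nat.succ_pos _
      exact_mod_cast this
    rw [← mul_le_mul_iff_right₀ hm0]
    calc (m : ℝ) * ((Bl j0).card : ℝ) ≤ (Fintype.card V : ℝ) := by exact_mod_cast hmin
      _ ≤ c * ((r : ℝ) + 1) * (δ : ℝ) ^ (k - 1) := hn
      _ ≤ c * ((m : ℝ) * (2 * (k : ℝ) + 1)) * (δ : ℝ) ^ (k - 1) := by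
          apply mul_le_mul_of_nonneg_right ?_ (by positivity)
          apply mul_le_mul_of_nonneg_left ?_ (le_of_lt hc)
          have : ((r : ℝ) + 1) ≤ ((m * (2 * k + 1) : ℕ) : ℝ) := by exact_mod_cast hr1
          calc ((r : ℝ) + 1) ≤ ((m * (2 * k + 1) : ℕ) : ℝ) := this
            _ = (m : ℝ) * (2 * (k : ℝ) + 1) := by push_cast; ring
      _ = (m : ℝ) * ((2 * (k : ℝ) + 1) * c * (δ : ℝ) ^ (k - 1)) := by ring
  · exact edge_count hconn hgirth hδ hδ2 hk (xc j0)
end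

section
/- Let G be a connected graph, let v_0, v_1, …, v_r be a geodesic path of length r from v_0, and let v_0 = v'_0, v'_1, …, v'_{r−t} be another geodesic path from v_0 of length r − t. Then for all i ≠ j, v_i ≠ v'_j. Moreover, fixing 1 ≤ m ≤ r−1, if d(v_m, v'_{r−t}) ≥ r then v_i ≠ v'_i for all i > (m + r − t − d(v_m, v'_{r−t}))/2. -/
private lemma dist_chain {V : Type*} (G : SimpleGraph V) (hconn : G.Connected)
    (w : ℕ → V) (n : ℕ) (hadj : ∀ k < n, G.Adj (w k) (w (k + 1))) :
    ∀ a b, a ≤ b → b ≤ n → G.dist (w a) (w b) ≤ b - a := by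
  intro a b hab hbn
  induction b, hab using Nat.le_induction with
  | base => simp
  | succ b hb ih =>
    have h1 : G.dist (w a) (w (b + 1)) ≤ G.dist (w a) (w b) + G.dist (w b) (w (b + 1)) :=
      hconn.dist_triangle
    have h2 : G.dist (w b) (w (b + 1)) = 1 :=
      (SimpleGraph.dist_eq_one_iff_adj).2 (hadj b (by omega))
    have := ih (by omega)
    omega

/-- Given geodesic paths `v 0, …, v r` and `v' 0 = v 0, …, v' (r - t)`:
for `i ≠ j` we have `v i ≠ v' j`; moreover for `1 ≤ m ≤ r - 1` with
`d(v m, v' (r - t)) ≥ r`, we have `v i ≠ v' i` for all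
`i > (m + r - t - d(v m, v' (r-t)))/2`. -/
theorem radius_girth_stmt17 {V : Type*} (G : SimpleGraph V) (hconn : G.Connected)
    (r t : ℕ) (ht : t ≤ r)
    (v v' : ℕ → V) (hv0 : v' 0 = v 0)
    (hgeo : ∀ i ≤ r, G.dist (v 0) (v i) = i)
    (hadj : ∀ i < r, G.Adj (v i) (v (i + 1)))
    (hgeo' : ∀ j ≤ r - t, G.dist (v 0) (v' j) = j)
    (hadj' : ∀ j < r - t, G.Adj (v' j) (v' (j + 1))) :
    (∀ i ≤ r, ∀ j ≤ r - t, i ≠ j → v i ≠ v' j) ∧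
    (∀ m, 1 ≤ m → m ≤ r - 1 → r ≤ G.dist (v m) (v' (r - t)) →
      ∀ i ≤ r - t,
        (m : ℤ) + r - t - G.dist (v m) (v' (r - t)) < 2 * i → v i ≠ v' i) := by
  constructor
  · intro i hi j hj hij heq
    apply hij
    rw [← hgeo i hi, ← hgeo' j hj, heq]
  · intro m hm1 hmr hd i hirt hlt heq
    have hr1 : 1 ≤ r := by omega
    have hmr' : m ≤ r := by omega
    set d := G.dist (v m) (v' (r - t)) with hdd
    have hchain' : G.dist (v' i) (v' (r - t)) ≤ r - t - i :=
      dist_chain G hconn v' (r - t) hadj' i (r - t) hirt le_rfl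
    by_cases hcase : i ≤ m
    · -- d ≤ (m - i) + (r - t - i)
      have h1 : G.dist (v m) (v i) ≤ m - i := by
        rw [SimpleGraph.dist_comm]
        exact dist_chain G hconn v r hadj i m hcase hmr'
      have htri : d ≤ G.dist (v m) (v i) + G.dist (v i) (v' (r - t)) := hconn.dist_triangle
      rw [heq] at htri h1
      have : d ≤ (m - i) + (r - t - i) := le_trans htri (by omega)
      have hle : (d : ℤ) ≤ (m : ℤ) + r - t - 2 * i := by
        push_cast
        omega
      omega
    · -- i > m : d ≤ (i - m) + (r - t - i) = r - t - m < r
      have h1 : G.dist (v m) (v i) ≤ i - m :=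
        dist_chain G hconn v r hadj m i (by omega) (by omega)
      have htri : d ≤ G.dist (v m) (v i) + G.dist (v i) (v' (r - t)) := hconn.dist_triangle
      rw [heq] at htri h1
      have : d ≤ (i - m) + (r - t - i) := le_trans htri (by omega)
      omega
end
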